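/- arXiv:1912.01570 — 3 statements merged into one kernel-verified Lean document; each statement's English description precedes it below -/
import Mathlib

section
/- A minimum-vertex counterexample to the inequality fvs ≤ 2·cp among subcubic planar multigraphs must be 3-regular. -/
/- A multigraph on vertex type `V` is represented by its multiset of edges,
   each edge being an unordered pair (`Sym2 V`); loops are `s(v, v)` and
   parallel edges are repeated elements of the multiset. -/

open Classical

namespace MG

variable {V : Type*}

/-- Degree of a vertex (a loop counts twice). -/
noncomputable def deg (G : Multiset (Sym2 V)) (v : V) : ℕ :=
  (G.map fun e => if e = s(v, v) then 2 else if v ∈ e then 1 else 0).sum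

/-- The vertices touched by some edge. -/
def support (G : Multiset (Sym2 V)) : Set V := {v | ∃ e ∈ G, v ∈ e}

/-- Adjacency. -/
def Adj (G : Multiset (Sym2 V)) (a b : V) : Prop := s(a, b) ∈ G

/-- Reachability. -/
def Reach (G : Multiset (Sym2 V)) : V → V → Prop := Relation.ReflTransGen (Adj G)

/-- Connectedness (of the non-isolated vertices). -/
def Conn (G : Multiset (Sym2 V)) : Prop :=
  (support G).Nonempty ∧ ∀ a ∈ support G, ∀ b ∈ support G, Reach G a b

/-- A multigraph is a cycle iff it is nonempty, connected and 2-regular. -/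
def IsCycle (C : Multiset (Sym2 V)) : Prop :=
  C ≠ 0 ∧ Conn C ∧ ∀ v ∈ support C, deg C v = 2

/-- A forest contains no cycle. -/
def IsForest (G : Multiset (Sym2 V)) : Prop := ∀ C ≤ G, ¬ IsCycle C

/-- Delete a set of vertices (removing all incident edges). -/
noncomputable def deleteVerts (G : Multiset (Sym2 V)) (S : Set V) : Multiset (Sym2 V) :=
  G.filter fun e => ∀ v ∈ e, v ∉ S

/-- Minimum size of a feedback vertex set. -/
noncomputable def fvs (G : Multiset (Sym2 V)) : ℕ :=
  sInf {n | ∃ S : Finset V, S.card = n ∧ IsForest (deleteVerts G ↑S)}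

/-- `f` is a packing of `n` pairwise vertex-disjoint cycles in `G`. -/
def IsCyclePackingOn (G : Multiset (Sym2 V)) {n : ℕ} (f : Fin n → Multiset (Sym2 V)) : Prop :=
  (∀ i, f i ≤ G ∧ IsCycle (f i)) ∧
    ∀ i j, i ≠ j → Disjoint (support (f i)) (support (f j))

/-- Maximum size of a cycle packing. -/
noncomputable def cp (G : Multiset (Sym2 V)) : ℕ :=
  sSup {n | ∃ f : Fin n → Multiset (Sym2 V), IsCyclePackingOn G f}

/-- `H` is a minor of the multigraph `G` (branch-set definition). -/
def HasMinor {W : Type*} (G : Multiset (Sym2 V)) (H : SimpleGraph W) : Prop :=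
  ∃ B : W → Set V, (∀ w, (B w).Nonempty) ∧
    (∀ w w', w ≠ w' → Disjoint (B w) (B w')) ∧
    (∀ w, ∀ a ∈ B w, ∀ b ∈ B w,
      Relation.ReflTransGen (fun x y => Adj G x y ∧ x ∈ B w ∧ y ∈ B w) a b) ∧
    (∀ w w', H.Adj w w' → ∃ a ∈ B w, ∃ b ∈ B w', Adj G a b)

/-- Planarity, via Wagner's characterization: no `K₅` minor and no `K₃,₃` minor. -/
def Planar (G : Multiset (Sym2 V)) : Prop :=
  ¬ HasMinor G (SimpleGraph.completeGraph (Fin 5)) ∧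
    ¬ HasMinor G (completeBipartiteGraph (Fin 3) (Fin 3))

/-- All degrees are at most 3. -/
def Subcubic (G : Multiset (Sym2 V)) : Prop := ∀ v, deg G v ≤ 3

/-- `H` is a connected component of `M`. -/
def IsComponent (M H : Multiset (Sym2 V)) : Prop :=
  H ≤ M ∧ Conn H ∧ ∀ e ∈ M - H, ∀ v ∈ e, v ∉ support H

end MG
namespace MG

variable {V : Type*}

lemma deg_cons' (e : Sym2 V) (A : Multiset (Sym2 V)) (v : V) :
    deg (e ::ₘ A) v = (if e = s(v, v) then 2 else if v ∈ e then 1 else 0) + deg A v := by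
  simp [deg]

lemma deg_mono {A B : Multiset (Sym2 V)} (h : A ≤ B) (v : V) : deg A v ≤ deg B v := by
  obtain ⟨C, rfl⟩ := Multiset.le_iff_exists_add.mp h
  simp [deg]

lemma deg_eq_zero_iff (A : Multiset (Sym2 V)) (v : V) :
    deg A v = 0 ↔ ∀ e ∈ A, v ∉ e := by
  induction A using Multiset.induction with
  | empty => simp [deg]
  | cons e A ih =>
    rw [deg_cons', Nat.add_eq_zero]
    constructor
    · rintro ⟨h1, h2⟩ f hf
      rcases Multiset.mem_cons.mp hf with rfl | hf
      · intro hv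
        split at h1
        · omega
        · simp [hv] at h1
      · exact (ih.mp h2) f hf
    · intro h
      refine ⟨?_, ih.mpr fun f hf => h f (Multiset.mem_cons_of_mem hf)⟩
      have := h e (Multiset.mem_cons_self e A)
      have hne : e ≠ s(v, v) := by rintro rfl; simp at this
      simp [hne, this]

lemma one_le_deg {A : Multiset (Sym2 V)} {v : V} (hv : v ∈ support A) : 1 ≤ deg A v := by
  rcases Nat.eq_zero_or_pos (deg A v) with h | h
  · obtain ⟨e, he, hve⟩ := hv
    exact absurd hve ((deg_eq_zero_iff A v).mp h e he)
  · exact h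

lemma support_mono {A B : Multiset (Sym2 V)} (h : A ≤ B) : support A ⊆ support B := by
  rintro x ⟨e, he, hx⟩
  exact ⟨e, Multiset.mem_of_le h he, hx⟩

lemma support_finite (G : Multiset (Sym2 V)) : (support G).Finite := by
  induction G using Multiset.induction with
  | empty =>
    have h0 : support (0 : Multiset (Sym2 V)) = ∅ := by ext x; simp [support]
    rw [h0]; exact Set.finite_empty
  | cons e A ih =>
    have hsub : support (e ::ₘ A) ⊆ {x | x ∈ e} ∪ support A := by
      rintro x ⟨f, hf, hx⟩
      rcases Multiset.mem_cons.mp hf with rfl | hf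
      · exact Or.inl hx
      · exact Or.inr ⟨f, hf, hx⟩
    refine Set.Finite.subset (Set.Finite.union ?_ ih) hsub
    induction e using Sym2.inductionOn with
    | hf a b =>
      have hab : {x | x ∈ s(a, b)} = {a, b} := by ext x; simp [Sym2.mem_iff]
      rw [hab]; exact (Set.finite_singleton b).insert a

lemma deg_eq_card (G : Multiset (Sym2 V)) (v : V) :
    deg G v = Multiset.card (G.filter (fun e => v ∈ e))
      + Multiset.card (G.filter (fun e => e = s(v, v))) := by
  induction G using Multiset.induction with
  | empty => simp [deg]
  | cons e A ih =>
    rw [deg_cons', Multiset.filter_cons, Multiset.filter_cons]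
    by_cases hl : e = s(v, v)
    · subst hl
      simp [ih]
      omega
    · by_cases hv : v ∈ e
      · simp [hl, hv, ih]
        omega
      · simp [hl, hv, ih]

lemma le_deleteVerts_iff {C G : Multiset (Sym2 V)} {S : Set V} :
    C ≤ deleteVerts G S ↔ C ≤ G ∧ ∀ e ∈ C, ∀ v ∈ e, v ∉ S :=
  Multiset.le_filter

lemma deleteVerts_le (G : Multiset (Sym2 V)) (S : Set V) : deleteVerts G S ≤ G :=
  Multiset.filter_le _ _

lemma forest_zero : IsForest (0 : Multiset (Sym2 V)) := by
  intro C hC hcyc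
  exact hcyc.1 (Multiset.le_zero.mp hC)

lemma fvs_set_nonempty (G : Multiset (Sym2 V)) :
    {n | ∃ S : Finset V, S.card = n ∧ IsForest (deleteVerts G ↑S)}.Nonempty := by
  refine ⟨(support_finite G).toFinset.card, (support_finite G).toFinset, rfl, ?_⟩
  have h0 : deleteVerts G ↑(support_finite G).toFinset = 0 := by
    rw [deleteVerts, Multiset.filter_eq_nil]
    intro e he h
    induction e using Sym2.inductionOn with
    | hf a b =>
      exact h a (by simp) (by simp only [Set.Finite.coe_toFinset]; exact ⟨s(a, b), he, by simp⟩)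
  rw [h0]; exact forest_zero

lemma fvs_spec (G : Multiset (Sym2 V)) :
    ∃ S : Finset V, S.card = fvs G ∧ IsForest (deleteVerts G ↑S) :=
  Nat.sInf_mem (fvs_set_nonempty G)

lemma fvs_le {G : Multiset (Sym2 V)} {S : Finset V} (h : IsForest (deleteVerts G ↑S)) :
    fvs G ≤ S.card :=
  Nat.sInf_le ⟨S, rfl, h⟩

lemma cp_set_nonempty (G : Multiset (Sym2 V)) :
    {n | ∃ f : Fin n → Multiset (Sym2 V), IsCyclePackingOn G f}.Nonempty :=
  ⟨0, fun i => 0, fun i => i.elim0, fun i => i.elim0⟩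

lemma cp_set_bddAbove (G : Multiset (Sym2 V)) :
    BddAbove {n | ∃ f : Fin n → Multiset (Sym2 V), IsCyclePackingOn G f} := by
  refine ⟨(support_finite G).toFinset.card, ?_⟩
  rintro n ⟨f, hf, hdisj⟩
  have hch : ∀ i : Fin n, ∃ x, x ∈ support (f i) := fun i => (hf i).2.2.1.1
  choose g hg using hch
  have hginj : Function.Injective g := by
    intro i j hij
    by_contra hne
    exact Set.disjoint_left.mp (hdisj i j hne) (hg i) (hij ▸ hg j)
  have hmem : ∀ i, g i ∈ (support_finite G).toFinset := by
    intro i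
    simp only [Set.Finite.mem_toFinset]
    exact support_mono (hf i).1 (hg i)
  have := Finset.card_le_card_of_injOn (s := (Finset.univ : Finset (Fin n))) g
    (fun i _ => hmem i) (fun i _ j _ h => hginj h)
  simpa using this

lemma le_cp {G : Multiset (Sym2 V)} {n : ℕ} {f : Fin n → Multiset (Sym2 V)}
    (h : IsCyclePackingOn G f) : n ≤ cp G :=
  le_csSup (cp_set_bddAbove G) ⟨f, h⟩

lemma cp_spec (G : Multiset (Sym2 V)) :
    ∃ f : Fin (cp G) → Multiset (Sym2 V), IsCyclePackingOn G f :=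
  Nat.sSup_mem (cp_set_nonempty G) (cp_set_bddAbove G)

lemma cp_mono_of_le {A B : Multiset (Sym2 V)} (h : A ≤ B) : cp A ≤ cp B := by
  obtain ⟨f, hf⟩ := cp_spec A
  exact le_cp ⟨fun i => ⟨le_trans (hf.1 i).1 h, (hf.1 i).2⟩, hf.2⟩

lemma adj_mono {A B : Multiset (Sym2 V)} (h : A ≤ B) {x y : V} (hxy : Adj A x y) :
    Adj B x y := Multiset.mem_of_le h hxy

lemma adj_symm {G : Multiset (Sym2 V)} {x y : V} (h : Adj G x y) : Adj G y x := by
  unfold Adj at *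
  rwa [Sym2.eq_swap]

lemma hasMinor_mono {W : Type*} {A B : Multiset (Sym2 V)} (h : A ≤ B) {K : SimpleGraph W}
    (hm : HasMinor A K) : HasMinor B K := by
  obtain ⟨Br, hne, hdisj, hconn, hadj⟩ := hm
  refine ⟨Br, hne, hdisj, fun w a ha b hb => ?_, fun w w' hww => ?_⟩
  · exact Relation.ReflTransGen.mono (r := fun x y => Adj A x y ∧ x ∈ Br w ∧ y ∈ Br w)
      (p := fun x y => Adj B x y ∧ x ∈ Br w ∧ y ∈ Br w)
      (by intro x y hxy; exact ⟨adj_mono h hxy.1, hxy.2.1, hxy.2.2⟩) a b (hconn w a ha b hb)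
  · obtain ⟨a, ha, b, hb, hab⟩ := hadj w w' hww
    exact ⟨a, ha, b, hb, adj_mono h hab⟩

lemma planar_mono {A B : Multiset (Sym2 V)} (h : A ≤ B) (hp : Planar B) : Planar A :=
  ⟨fun hm => hp.1 (hasMinor_mono h hm), fun hm => hp.2 (hasMinor_mono h hm)⟩

lemma every_vertex_has_neighbor_K5 : ∀ w : Fin 5, ∃ w', (SimpleGraph.completeGraph (Fin 5)).Adj w w' := by
  intro w
  obtain ⟨w', hw'⟩ := exists_ne w
  exact ⟨w', Ne.symm hw'⟩

lemma every_vertex_has_neighbor_K33 :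
    ∀ w : Fin 3 ⊕ Fin 3, ∃ w', (completeBipartiteGraph (Fin 3) (Fin 3)).Adj w w' := by
  rintro (i | i)
  · exact ⟨Sum.inr 0, by simp⟩
  · exact ⟨Sum.inl 0, by simp⟩

lemma suppress_minor {W : Type*} {K : SimpleGraph W} (hK : ∀ w, ∃ w', K.Adj w w')
    {G G₀ : Multiset (Sym2 V)} {v a b : V} (hav : a ≠ v) (hbv : b ≠ v)
    (hG₀ : ∀ e ∈ G₀, v ∉ e) (hG₀G : G₀ ≤ G) (hva : s(v, a) ∈ G) (hvb : s(v, b) ∈ G)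
    (hm : HasMinor (s(a, b) ::ₘ G₀) K) : HasMinor G K := by
  obtain ⟨B, hne, hdisj, hconn, hadj⟩ := hm
  set H : Multiset (Sym2 V) := s(a, b) ::ₘ G₀ with hH
  have hvH : ∀ e ∈ H, v ∉ e := by
    intro e he hv
    rcases Multiset.mem_cons.mp he with rfl | he
    · rcases Sym2.mem_iff.mp hv with rfl | rfl
      · exact hav rfl
      · exact hbv rfl
    · exact hG₀ e he hv
  have hvB : ∀ w, v ∉ B w := by
    intro w₀ hvw
    obtain ⟨w', hK'⟩ := hK w₀
    obtain ⟨x, hx, y, hy, hxy⟩ := hadj w₀ w' hK'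
    have hx_eq : x = v := by
      have hre := hconn w₀ x hx v hvw
      rcases Relation.ReflTransGen.cases_tail hre with h | ⟨c, _, hc, _, _⟩
      · exact h.symm
      · exact absurd (by simp : v ∈ s(c, v)) (hvH _ hc)
    subst hx_eq
    exact hvH _ hxy (by simp)
  set B' : W → Set V := fun w => B w ∪ {x | x = v ∧ a ∈ B w} with hB'
  have hBsub : ∀ w, B w ⊆ B' w := fun w => Set.subset_union_left
  have main : ∀ w, ∀ x ∈ B w, ∀ y ∈ B w,
      Relation.ReflTransGen (fun x y => Adj G x y ∧ x ∈ B' w ∧ y ∈ B' w) x y := by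
    intro w x hx y hy
    have step : ∀ p q : V, (Adj H p q ∧ p ∈ B w ∧ q ∈ B w) →
        Relation.ReflTransGen (fun x y => Adj G x y ∧ x ∈ B' w ∧ y ∈ B' w) p q := by
      rintro p q ⟨hpq, hp, hq⟩
      rcases Multiset.mem_cons.mp hpq with heq | hmem
      · rcases Sym2.eq_iff.mp heq with ⟨rfl, rfl⟩ | ⟨rfl, rfl⟩
        · have hvB' : v ∈ B' w := Or.inr ⟨rfl, hp⟩
          refine Relation.ReflTransGen.head ⟨adj_symm hva, hBsub w hp, hvB'⟩ ?_
          exact Relation.ReflTransGen.single ⟨hvb, hvB', hBsub w hq⟩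
        · have hvB' : v ∈ B' w := Or.inr ⟨rfl, hq⟩
          refine Relation.ReflTransGen.head ⟨adj_symm hvb, hBsub w hp, hvB'⟩ ?_
          exact Relation.ReflTransGen.single ⟨hva, hvB', hBsub w hq⟩
      · exact Relation.ReflTransGen.single
          ⟨Multiset.mem_of_le hG₀G hmem, hBsub w hp, hBsub w hq⟩
    have hre := hconn w x hx y hy
    induction hre with
    | refl => exact Relation.ReflTransGen.refl
    | tail h1 h2 ih =>
      exact Relation.ReflTransGen.trans (ih h2.2.1) (step _ _ h2)
  refine ⟨B', fun w => ⟨(hne w).choose, hBsub w (hne w).choose_spec⟩, ?_, ?_, ?_⟩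
  · intro w w' hww
    rw [Set.disjoint_left]
    rintro z (hz | ⟨rfl, haw⟩) (hz' | ⟨hzv, haw'⟩)
    · exact Set.disjoint_left.mp (hdisj w w' hww) hz hz'
    · exact hvB w (hzv ▸ hz)
    · exact hvB w' hz'
    · exact Set.disjoint_left.mp (hdisj w w' hww) haw haw'
  · rintro w x (hx | ⟨rfl, haw⟩) y (hy | ⟨rfl, haw'⟩)
    · exact main w x hx y hy
    · exact (main w x hx a haw').tail ⟨adj_symm hva, hBsub w haw', Or.inr ⟨rfl, haw'⟩⟩
    · exact Relation.ReflTransGen.head ⟨hva, Or.inr ⟨rfl, haw⟩, hBsub w haw⟩ (main w a haw y hy)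
    · exact Relation.ReflTransGen.refl
  · intro w w' hK'
    obtain ⟨x, hx, y, hy, hxy⟩ := hadj w w' hK'
    rcases Multiset.mem_cons.mp hxy with heq | hmem
    · rcases Sym2.eq_iff.mp heq with ⟨rfl, rfl⟩ | ⟨rfl, rfl⟩
      · exact ⟨v, Or.inr ⟨rfl, hx⟩, y, hBsub w' hy, hvb⟩
      · exact ⟨x, hBsub w hx, v, Or.inr ⟨rfl, hy⟩, adj_symm hvb⟩
    · exact ⟨x, hBsub w hx, y, hBsub w' hy, Multiset.mem_of_le hG₀G hmem⟩

lemma support_cons (e : Sym2 V) (A : Multiset (Sym2 V)) :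
    support (e ::ₘ A) = {x | x ∈ e} ∪ support A := by
  ext x
  constructor
  · rintro ⟨f, hf, hx⟩
    rcases Multiset.mem_cons.mp hf with rfl | hf
    · exact Or.inl hx
    · exact Or.inr ⟨f, hf, hx⟩
  · rintro (hx | ⟨f, hf, hx⟩)
    · exact ⟨e, Multiset.mem_cons_self e A, hx⟩
    · exact ⟨f, Multiset.mem_cons_of_mem hf, hx⟩

lemma deg_edge_subst {v a b u : V} (hav : a ≠ v) (hbv : b ≠ v) (hu : u ≠ v) :
    deg ({s(a, b)} : Multiset (Sym2 V)) u
      = deg ({s(v, a)} : Multiset (Sym2 V)) u + deg ({s(v, b)} : Multiset (Sym2 V)) u := by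
  simp only [deg, Multiset.map_singleton, Multiset.sum_singleton]
  split_ifs <;> (try omega) <;> simp_all [Sym2.eq_iff, Sym2.mem_iff] <;> omega

/-- Replacing a path `a - v - b` by the edge `ab` preserves being a cycle. -/
lemma isCycle_suppress {C₀ : Multiset (Sym2 V)} {v a b : V} (hav : a ≠ v) (hbv : b ≠ v)
    (hC₀ : ∀ e ∈ C₀, v ∉ e)
    (hcyc : IsCycle (s(v, a) ::ₘ s(v, b) ::ₘ C₀)) : IsCycle (s(a, b) ::ₘ C₀) := by
  set C : Multiset (Sym2 V) := s(v, a) ::ₘ s(v, b) ::ₘ C₀ with hC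
  set C' : Multiset (Sym2 V) := s(a, b) ::ₘ C₀ with hC'
  have haC : a ∈ support C := ⟨s(v, a), by simp [hC], by simp⟩
  have hbC : b ∈ support C := ⟨s(v, b), by simp [hC], by simp⟩
  have hsub : support C' ⊆ support C := by
    rintro x ⟨f, hf, hx⟩
    rcases Multiset.mem_cons.mp hf with rfl | hf
    · rcases Sym2.mem_iff.mp hx with rfl | rfl
      · exact haC
      · exact hbC
    · exact ⟨f, by simp [hC, hf], hx⟩
  have hvC' : v ∉ support C' := by
    rintro ⟨f, hf, hx⟩
    rcases Multiset.mem_cons.mp hf with rfl | hf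
    · rcases Sym2.mem_iff.mp hx with rfl | rfl
      · exact hav rfl
      · exact hbv rfl
    · exact hC₀ f hf hx
  have hdeg : ∀ u ∈ support C', deg C' u = 2 := by
    intro u hu
    have hune : u ≠ v := fun h => hvC' (h ▸ hu)
    have h1 : deg C' u = deg ({s(a, b)} : Multiset (Sym2 V)) u + deg C₀ u := by
      rw [hC', deg_cons']; simp [deg]
    have h2 : deg C u = deg ({s(v, a)} : Multiset (Sym2 V)) u
        + deg ({s(v, b)} : Multiset (Sym2 V)) u + deg C₀ u := by
      rw [hC, deg_cons', deg_cons']; simp [deg]; ring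
    have := hcyc.2.2 u (hsub hu)
    rw [h2, ← deg_edge_subst hav hbv hune, ← h1] at this
    exact this
  refine ⟨by simp [hC'], ⟨⟨a, ⟨s(a, b), by simp [hC'], by simp⟩⟩, ?_⟩, hdeg⟩
  have key : ∀ x y : V, Reach C x y →
      Reach C' (if x = v then a else x) (if y = v then a else y) := by
    intro x y h
    induction h with
    | refl => exact Relation.ReflTransGen.refl
    | @tail p q h1 h2 ih =>
      refine Relation.ReflTransGen.trans ih ?_
      have habC' : Adj C' a b := by simp [hC', Adj]
      rcases Multiset.mem_cons.mp h2 with heq | h3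
      · rcases Sym2.eq_iff.mp heq with ⟨hp, hq⟩ | ⟨hp, hq⟩
        · rw [if_pos hp, hq, if_neg hav]
        · rw [if_pos hq, hp, if_neg hav]
      rcases Multiset.mem_cons.mp h3 with heq | h4
      · rcases Sym2.eq_iff.mp heq with ⟨hp, hq⟩ | ⟨hp, hq⟩
        · rw [if_pos hp, hq, if_neg hbv]
          exact Relation.ReflTransGen.single habC'
        · rw [if_pos hq, hp, if_neg hbv]
          exact Relation.ReflTransGen.single (adj_symm habC')
      · have hp : p ≠ v := fun h => hC₀ _ h4 (h ▸ (by simp : p ∈ s(p, q)))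
        have hq : q ≠ v := fun h => hC₀ _ h4 (h ▸ (by simp : q ∈ s(p, q)))
        rw [if_neg hp, if_neg hq]
        exact Relation.ReflTransGen.single (show Adj C' p q from Multiset.mem_cons_of_mem h4)
  intro x hx y hy
  have hxv : x ≠ v := fun h => hvC' (h ▸ hx)
  have hyv : y ≠ v := fun h => hvC' (h ▸ hy)
  have := key x y (hcyc.2.1.2 x (hsub hx) y (hsub hy))
  rwa [if_neg hxv, if_neg hyv] at this

/-- Replacing the edge `ab` by a path `a - v - b` preserves being a cycle. -/
lemma isCycle_expand {D₀ : Multiset (Sym2 V)} {v a b : V} (hav : a ≠ v) (hbv : b ≠ v)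
    (hD₀ : ∀ e ∈ D₀, v ∉ e)
    (hcyc : IsCycle (s(a, b) ::ₘ D₀)) :
    IsCycle (s(v, a) ::ₘ s(v, b) ::ₘ D₀) ∧
      support (s(v, a) ::ₘ s(v, b) ::ₘ D₀) = support (s(a, b) ::ₘ D₀) ∪ {v} := by
  set D : Multiset (Sym2 V) := s(a, b) ::ₘ D₀ with hD
  set D' : Multiset (Sym2 V) := s(v, a) ::ₘ s(v, b) ::ₘ D₀ with hD'
  have haD : a ∈ support D := ⟨s(a, b), by simp [hD], by simp⟩
  have hsupp : support D' = support D ∪ {v} := by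
    rw [hD', hD, support_cons, support_cons, support_cons]
    ext x
    simp only [Set.mem_union, Set.mem_setOf_eq, Sym2.mem_iff, Set.mem_singleton_iff]
    tauto
  have hD₀v : deg D₀ v = 0 := (deg_eq_zero_iff D₀ v).mpr hD₀
  have hdeg : ∀ u ∈ support D', deg D' u = 2 := by
    intro u hu
    by_cases huv : u = v
    · have h1 : (s(v, a) : Sym2 V) ≠ s(v, v) := by simp [Sym2.eq_iff, hav]
      have h2 : (s(v, b) : Sym2 V) ≠ s(v, v) := by simp [Sym2.eq_iff, hbv]
      rw [huv, hD', deg_cons', deg_cons', hD₀v, if_neg h1, if_neg h2,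
        if_pos (by simp : v ∈ s(v, a)), if_pos (by simp : v ∈ s(v, b))]
    · have huD : u ∈ support D := by
        rcases hsupp ▸ hu with h | h
        · exact h
        · exact absurd h huv
      have h1 : deg D' u = deg ({s(v, a)} : Multiset (Sym2 V)) u
          + deg ({s(v, b)} : Multiset (Sym2 V)) u + deg D₀ u := by
        rw [hD', deg_cons', deg_cons']; simp [deg]; ring
      have h2 : deg D u = deg ({s(a, b)} : Multiset (Sym2 V)) u + deg D₀ u := by
        rw [hD, deg_cons']; simp [deg]
      have := hcyc.2.2 u huD
      rw [h2, deg_edge_subst hav hbv huv, ← h1] at this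
      exact this
  have hvaD' : Adj D' v a := by simp [hD', Adj]
  have hvbD' : Adj D' v b := by simp [hD', Adj]
  have key : ∀ x y : V, Reach D x y → Reach D' x y := by
    intro x y h
    induction h with
    | refl => exact Relation.ReflTransGen.refl
    | @tail p q h1 h2 ih =>
      refine Relation.ReflTransGen.trans ih ?_
      rcases Multiset.mem_cons.mp h2 with heq | h3
      · rcases Sym2.eq_iff.mp heq with ⟨hp, hq⟩ | ⟨hp, hq⟩
        · rw [hp, hq]
          exact Relation.ReflTransGen.head (adj_symm hvaD') (Relation.ReflTransGen.single hvbD')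
        · rw [hp, hq]
          exact Relation.ReflTransGen.head (adj_symm hvbD') (Relation.ReflTransGen.single hvaD')
      · exact Relation.ReflTransGen.single
          (show Adj D' p q from Multiset.mem_cons_of_mem (Multiset.mem_cons_of_mem h3))
  refine ⟨⟨by simp [hD'], ⟨⟨v, ⟨s(v, a), by simp [hD'], by simp⟩⟩, ?_⟩, hdeg⟩, hsupp⟩
  intro x hx y hy
  have hmem : ∀ z ∈ support D', Reach D' z a := by
    intro z hz
    by_cases hzv : z = v
    · subst hzv; exact Relation.ReflTransGen.single hvaD'
    · have hzD : z ∈ support D := by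
        rcases hsupp ▸ hz with h | h
        · exact h
        · exact absurd h hzv
      exact key z a (hcyc.2.1.2 z hzD a haD)
  have hsymR : ∀ p q : V, Reach D' p q → Reach D' q p := by
    intro p q h
    induction h with
    | refl => exact Relation.ReflTransGen.refl
    | tail h1 h2 ih => exact Relation.ReflTransGen.head (adj_symm h2) ih
  exact Relation.ReflTransGen.trans (hmem x hx) (hsymR y a (hmem y hy))

lemma fvs_delete_le (G : Multiset (Sym2 V)) (T : Finset V) :
    fvs G ≤ fvs (deleteVerts G ↑T) + T.card := by
  obtain ⟨S, hSc, hSf⟩ := fvs_spec (deleteVerts G ↑T)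
  have hforest : IsForest (deleteVerts G ↑(S ∪ T)) := by
    intro C hC
    apply hSf C
    refine Multiset.le_filter.mpr ⟨Multiset.le_filter.mpr
      ⟨le_trans hC (deleteVerts_le _ _), ?_⟩, ?_⟩
    · intro e he u hu hT
      exact (Multiset.le_filter.mp hC).2 e he u hu (by simp [hT])
    · intro e he u hu hS
      exact (Multiset.le_filter.mp hC).2 e he u hu (by simp [hS])
  calc fvs G ≤ (S ∪ T).card := fvs_le hforest
    _ ≤ S.card + T.card := Finset.card_union_le S T
    _ = fvs (deleteVerts G ↑T) + T.card := by rw [hSc]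

lemma cp_delete_add_one {G D : Multiset (Sym2 V)} {S : Set V}
    (hD : D ≤ G) (hDc : IsCycle D) (hDS : ∀ x ∈ support D, x ∈ S) :
    cp (deleteVerts G S) + 1 ≤ cp G := by
  obtain ⟨f, hfp, hfd⟩ := cp_spec (deleteVerts G S)
  have hsupf : ∀ i, ∀ x ∈ support (f i), x ∉ S := by
    intro i x hx
    obtain ⟨e, he, hxe⟩ := hx
    exact (Multiset.mem_filter.mp (Multiset.mem_of_le (hfp i).1 he)).2 x hxe
  refine le_cp (f := fun i : Fin (cp (deleteVerts G S) + 1) =>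
    if h : (i : ℕ) < cp (deleteVerts G S) then f ⟨i, h⟩ else D) ⟨?_, ?_⟩
  · intro i
    by_cases h : (i : ℕ) < cp (deleteVerts G S)
    · simp only [dif_pos h]
      exact ⟨le_trans (hfp _).1 (deleteVerts_le _ _), (hfp _).2⟩
    · simp only [dif_neg h]
      exact ⟨hD, hDc⟩
  · intro i j hij
    by_cases hi : (i : ℕ) < cp (deleteVerts G S) <;> by_cases hj : (j : ℕ) < cp (deleteVerts G S)
    · simp only [dif_pos hi, dif_pos hj]
      refine hfd _ _ (fun h => hij (Fin.ext ?_))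
      have := congrArg Fin.val h
      simpa using this
    · simp only [dif_pos hi, dif_neg hj]
      exact Set.disjoint_left.mpr (fun x hx hx' => hsupf _ x hx (hDS x hx'))
    · simp only [dif_neg hi, dif_pos hj]
      exact Set.disjoint_right.mpr (fun x hx hx' => hsupf _ x hx (hDS x hx'))
    · exact absurd (Fin.ext (by omega)) hij

end MG
open MG

/-- A minimum-vertex counterexample to `fvs ≤ 2 * cp` among subcubic planar
multigraphs is 3-regular. -/
theorem min_counterexample_cubic {V : Type*} (G : Multiset (Sym2 V))
    (hsub : MG.Subcubic G) (hplanar : MG.Planar G)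
    (hcex : 2 * MG.cp G < MG.fvs G)
    (hmin : ∀ H : Multiset (Sym2 V), MG.Subcubic H → MG.Planar H →
      (MG.support H).ncard < (MG.support G).ncard → MG.fvs H ≤ 2 * MG.cp H) :
    ∀ v ∈ MG.support G, MG.deg G v = 3 := by
  by_contra hcon
  push_neg at hcon
  obtain ⟨v, hvsup, hvne⟩ := hcon
  have hfin := support_finite G
  -- generic way to derive a contradiction from a smaller graph
  have handler : ∀ (H : Multiset (Sym2 V)) (k m : ℕ) (u : V), Subcubic H → Planar H →
      support H ⊆ support G → u ∈ support G → u ∉ support H →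
      fvs G ≤ fvs H + k → cp H + m ≤ cp G → k ≤ 2 * m → False := by
    intro H k m u hsubH hplH hsupH hu1 hu2 hf hc hkm
    have hlt : (support H).ncard < (support G).ncard :=
      Set.ncard_lt_ncard ((Set.ssubset_iff_of_subset hsupH).mpr ⟨u, hu1, hu2⟩) hfin
    have := hmin H hsubH hplH hlt
    omega
  have hnotin : ∀ (S : Set V) (x : V), x ∈ S → x ∉ support (deleteVerts G S) := by
    rintro S x hx ⟨e, he, hxe⟩
    exact (Multiset.mem_filter.mp he).2 x hxe hx
  -- step 1 : G has no loops
  have hnoloop : ∀ u : V, s(u, u) ∉ G := by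
    intro u hu
    have huG : u ∈ support G := ⟨s(u, u), hu, by simp⟩
    set H := deleteVerts G ({u} : Set V) with hH
    have hloopc : IsCycle ({s(u, u)} : Multiset (Sym2 V)) := by
      have hs : support ({s(u, u)} : Multiset (Sym2 V)) = {u} := by
        ext x
        simp [support, Sym2.mem_iff]
      refine ⟨by simp, ⟨⟨u, by rw [hs]; rfl⟩, ?_⟩, ?_⟩
      · intro x hx y hy
        rw [hs] at hx hy
        rw [Set.mem_singleton_iff] at hx hy
        subst hx; subst hy
        exact Relation.ReflTransGen.refl
      · intro x hx
        rw [hs, Set.mem_singleton_iff] at hx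
        subst hx
        simp [deg]
    have hf : fvs G ≤ fvs H + 1 := by
      have := fvs_delete_le G ({u} : Finset V)
      simpa using this
    have hc : cp H + 1 ≤ cp G := by
      refine cp_delete_add_one (Multiset.singleton_le.mpr hu) hloopc ?_
      rintro x ⟨e, he, hxe⟩
      rw [Multiset.mem_singleton] at he
      subst he
      rcases Sym2.mem_iff.mp hxe with rfl | rfl <;> rfl
    exact handler H 1 1 u
      (fun w => le_trans (deg_mono (deleteVerts_le _ _) w) (hsub w))
      (planar_mono (deleteVerts_le _ _) hplanar)
      (support_mono (deleteVerts_le _ _)) huG (hnotin _ _ rfl) hf hc (by omega)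
  -- degree analysis
  have hd3 := hsub v
  have hd1 := one_le_deg hvsup
  have hEvL := deg_eq_card G v
  have hL : G.filter (fun e => e = s(v, v)) = 0 :=
    Multiset.filter_eq_nil.mpr (fun e he h => hnoloop v (h ▸ he))
  rw [hL] at hEvL
  simp only [Multiset.card_zero, Nat.add_zero] at hEvL
  set Ev := G.filter (fun e => v ∈ e) with hEvdef
  set G₀ := G.filter (fun e => ¬ v ∈ e) with hG₀def
  have hG₀ : ∀ e ∈ G₀, v ∉ e := fun e he => (Multiset.mem_filter.mp he).2
  have hG₀le : G₀ ≤ G := Multiset.filter_le _ _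
  have hGsplit : Ev + G₀ = G := Multiset.filter_add_not _ _
  rcases (by omega : deg G v = 1 ∨ deg G v = 2) with hdeg | hdeg
  · -- degree one : just delete v
    set H := deleteVerts G ({v} : Set V) with hH
    have hf : fvs G ≤ fvs H := by
      obtain ⟨S, hSc, hSf⟩ := fvs_spec H
      rw [← hSc]
      apply fvs_le
      intro C hC hcyc
      obtain ⟨hCG, hCS⟩ := Multiset.le_filter.mp hC
      have hvC : v ∉ support C := by
        intro hvC
        have h2 := hcyc.2.2 v hvC
        have := deg_mono hCG v
        omega
      refine hSf C (Multiset.le_filter.mpr ⟨Multiset.le_filter.mpr ⟨hCG, ?_⟩, hCS⟩) hcyc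
      intro e he u hu hu'
      rw [Set.mem_singleton_iff] at hu'
      subst hu'
      exact hvC ⟨e, he, hu⟩
    exact handler H 0 0 v
      (fun w => le_trans (deg_mono (deleteVerts_le _ _) w) (hsub w))
      (planar_mono (deleteVerts_le _ _) hplanar)
      (support_mono (deleteVerts_le _ _)) hvsup (hnotin _ _ rfl) hf
      (by simpa using cp_mono_of_le (deleteVerts_le G _)) (by omega)
  · -- degree two : suppress v
    rw [hdeg] at hEvL
    obtain ⟨e₁, e₂, hEv⟩ := Multiset.card_eq_two.mp hEvL.symm
    have he₁m : e₁ ∈ Ev := by rw [hEv]; simp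
    have he₂m : e₂ ∈ Ev := by rw [hEv]; simp
    obtain ⟨he₁G, he₁v⟩ := Multiset.mem_filter.mp he₁m
    obtain ⟨he₂G, he₂v⟩ := Multiset.mem_filter.mp he₂m
    obtain ⟨a, ha⟩ := Sym2.mem_iff_exists.mp he₁v
    obtain ⟨b, hb⟩ := Sym2.mem_iff_exists.mp he₂v
    have hav : a ≠ v := by
      intro h
      rw [ha, h] at he₁G
      exact hnoloop v he₁G
    have hbv : b ≠ v := by
      intro h
      rw [hb, h] at he₂G
      exact hnoloop v he₂G
    rw [ha] at hEv he₁G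
    rw [hb] at hEv he₂G
    have hEv2 : Ev = s(v, a) ::ₘ s(v, b) ::ₘ 0 := by rw [hEv]; rfl
    have hGeq : G = s(v, a) ::ₘ s(v, b) ::ₘ G₀ := by
      conv_lhs => rw [← hGsplit, hEv2]
      rw [Multiset.cons_add, Multiset.cons_add, zero_add]
    set H : Multiset (Sym2 V) := s(a, b) ::ₘ G₀ with hHdef
    have hvH : v ∉ support H := by
      rintro ⟨e, he, hv⟩
      rcases Multiset.mem_cons.mp he with rfl | he
      · rcases Sym2.mem_iff.mp hv with rfl | rfl
        · exact hav rfl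
        · exact hbv rfl
      · exact hG₀ e he hv
    have hvHe : ∀ e ∈ H, v ∉ e := fun e he hv => hvH ⟨e, he, hv⟩
    have hsupH : support H ⊆ support G := by
      rintro x ⟨e, he, hx⟩
      rcases Multiset.mem_cons.mp he with rfl | he
      · rcases Sym2.mem_iff.mp hx with rfl | rfl
        · exact ⟨s(v, x), he₁G, by simp⟩
        · exact ⟨s(v, x), he₂G, by simp⟩
      · exact ⟨e, Multiset.mem_of_le hG₀le he, hx⟩
    have hsubH : Subcubic H := by
      intro u
      by_cases huv : u = v
      · rw [huv, (deg_eq_zero_iff H v).mpr hvHe]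
        omega
      · have h1 : deg H u = deg ({s(a, b)} : Multiset (Sym2 V)) u + deg G₀ u := by
          rw [hHdef, deg_cons']; simp [deg]
        have h2 : deg G u = deg ({s(v, a)} : Multiset (Sym2 V)) u
            + deg ({s(v, b)} : Multiset (Sym2 V)) u + deg G₀ u := by
          rw [hGeq, deg_cons', deg_cons']; simp [deg]; ring
        have h3 := hsub u
        rw [h2, ← deg_edge_subst hav hbv huv, ← h1] at h3
        exact h3
    have hplH : Planar H :=
      ⟨fun hm => hplanar.1
        (suppress_minor every_vertex_has_neighbor_K5 hav hbv hG₀ hG₀le he₁G he₂G hm),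
       fun hm => hplanar.2
        (suppress_minor every_vertex_has_neighbor_K33 hav hbv hG₀ hG₀le he₁G he₂G hm)⟩
    -- fvs G ≤ fvs H
    have hf : fvs G ≤ fvs H := by
      obtain ⟨S, hSc, hSf⟩ := fvs_spec H
      rw [← hSc]
      apply fvs_le
      intro C hC hcyc
      obtain ⟨hCG, hCS⟩ := Multiset.le_filter.mp hC
      by_cases hvC : v ∈ support C
      · -- C goes through v, reroute it
        have hdegC : deg C v = 2 := hcyc.2.2 v hvC
        have hCfil : C.filter (fun e => v ∈ e) ≤ Ev := Multiset.filter_le_filter _ hCG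
        have hloopC : C.filter (fun e => e = s(v, v)) = 0 :=
          Multiset.filter_eq_nil.mpr
            (fun e he h => hnoloop v (h ▸ Multiset.mem_of_le hCG he))
        have hcard : Multiset.card (C.filter (fun e => v ∈ e)) = 2 := by
          have hcc := deg_eq_card C v
          rw [hloopC] at hcc
          simp only [Multiset.card_zero, Nat.add_zero] at hcc
          omega
        have hEvC : (s(v, a) ::ₘ s(v, b) ::ₘ 0) ≤ C := by
          rw [← hEv2]
          have heq : C.filter (fun e => v ∈ e) = Ev :=
            Multiset.eq_of_le_of_card_le hCfil (by rw [hcard, hEvL])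
          rw [← heq]
          exact Multiset.filter_le _ _
        obtain ⟨C₀, hC₀eq⟩ := Multiset.le_iff_exists_add.mp hEvC
        have hCeq : C = s(v, a) ::ₘ s(v, b) ::ₘ C₀ := by
          rw [hC₀eq, Multiset.cons_add, Multiset.cons_add, zero_add]
        have hC₀v : ∀ e ∈ C₀, v ∉ e := by
          have hdC : deg C₀ v = 0 := by
            have hda : (if s(v, a) = s(v, v) then 2 else if v ∈ s(v, a) then 1 else 0) = 1 := by
              rw [if_neg (by simp [Sym2.eq_iff, hav] : (s(v, a) : Sym2 V) ≠ s(v, v)),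
                if_pos (by simp : v ∈ s(v, a))]
            have hdb : (if s(v, b) = s(v, v) then 2 else if v ∈ s(v, b) then 1 else 0) = 1 := by
              rw [if_neg (by simp [Sym2.eq_iff, hbv] : (s(v, b) : Sym2 V) ≠ s(v, v)),
                if_pos (by simp : v ∈ s(v, b))]
            have := hdegC
            rw [hCeq, deg_cons', deg_cons', hda, hdb] at this
            omega
          exact (deg_eq_zero_iff _ _).mp hdC
        have hcyc' : IsCycle (s(a, b) ::ₘ C₀) :=
          isCycle_suppress hav hbv hC₀v (hCeq ▸ hcyc)
        refine hSf (s(a, b) ::ₘ C₀) (Multiset.le_filter.mpr ⟨?_, ?_⟩) hcyc'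
        · refine Multiset.cons_le_cons _ (Multiset.le_filter.mpr ⟨?_, hC₀v⟩)
          refine le_trans ?_ hCG
          rw [hCeq]
          exact le_trans (Multiset.le_cons_self _ _) (Multiset.le_cons_self _ _)
        · intro e he u hu
          rcases Multiset.mem_cons.mp he with rfl | he
          · rcases Sym2.mem_iff.mp hu with rfl | rfl
            · exact hCS s(v, u) (by rw [hCeq]; simp) u (by simp)
            · exact hCS s(v, u) (by rw [hCeq]; simp) u (by simp)
          · refine hCS e ?_ u hu
            rw [hCeq]
            exact Multiset.mem_cons_of_mem (Multiset.mem_cons_of_mem he)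
      · -- C avoids v
        have hCv : ∀ e ∈ C, ¬ v ∈ e := fun e he hv => hvC ⟨e, he, hv⟩
        have hCG₀ : C ≤ G₀ := Multiset.le_filter.mpr ⟨hCG, hCv⟩
        exact hSf C (Multiset.le_filter.mpr
          ⟨le_trans hCG₀ (Multiset.le_cons_self _ _), hCS⟩) hcyc
    -- cp H ≤ cp G
    have hc : cp H ≤ cp G := by
      obtain ⟨f, hfp, hfd⟩ := cp_spec H
      have hvfi : ∀ i, ∀ e ∈ f i, v ∉ e :=
        fun i e he hv => hvH ⟨e, Multiset.mem_of_le (hfp i).1 he, hv⟩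
      have hcount : ∀ i, ∀ e, Multiset.count e (f i) ≤ Multiset.count e H :=
        fun i => Multiset.le_iff_count.mp (hfp i).1
      refine le_cp (f := fun i => if s(a, b) ∈ f i then
        s(v, a) ::ₘ s(v, b) ::ₘ (f i).erase s(a, b) else f i) ⟨?_, ?_⟩
      · intro i
        dsimp only
        by_cases hab : s(a, b) ∈ f i
        · rw [if_pos hab]
          have hfi_eq : f i = s(a, b) ::ₘ (f i).erase s(a, b) := (Multiset.cons_erase hab).symm
          have hD₀ : ∀ e ∈ (f i).erase s(a, b), v ∉ e :=
            fun e he => hvfi i e (Multiset.mem_of_le (Multiset.erase_le _ _) he)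
          refine ⟨?_, (isCycle_expand hav hbv hD₀ (hfi_eq ▸ (hfp i).2)).1⟩
          rw [Multiset.le_iff_count]
          intro e
          have key : Multiset.count e ((f i).erase s(a, b)) ≤ Multiset.count e G₀ := by
            by_cases heab : e = s(a, b)
            · rw [heab, Multiset.count_erase_self]
              have h5 := hcount i s(a, b)
              rw [hHdef, Multiset.count_cons_self] at h5
              omega
            · rw [Multiset.count_erase_of_ne heab]
              have h5 := hcount i e
              rwa [hHdef, Multiset.count_cons_of_ne heab] at h5
          rw [hGeq]
          simp only [Multiset.count_cons]
          omega
        · rw [if_neg hab]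
          refine ⟨?_, (hfp i).2⟩
          rw [Multiset.le_iff_count]
          intro e
          by_cases heab : e = s(a, b)
          · rw [heab, Multiset.count_eq_zero.mpr hab]
            exact Nat.zero_le _
          · have h5 := hcount i e
            rw [hHdef, Multiset.count_cons_of_ne heab] at h5
            exact le_trans h5 (Multiset.le_iff_count.mp hG₀le e)
      · intro i j hij
        have hgsup : ∀ k, support (if s(a, b) ∈ f k then
            s(v, a) ::ₘ s(v, b) ::ₘ (f k).erase s(a, b) else f k) ⊆ support (f k) ∪ {v} := by
          intro k
          by_cases hab : s(a, b) ∈ f k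
          · rw [if_pos hab]
            have hfi_eq : f k = s(a, b) ::ₘ (f k).erase s(a, b) := (Multiset.cons_erase hab).symm
            have hD₀ : ∀ e ∈ (f k).erase s(a, b), v ∉ e :=
              fun e he => hvfi k e (Multiset.mem_of_le (Multiset.erase_le _ _) he)
            have := (isCycle_expand hav hbv hD₀ (hfi_eq ▸ (hfp k).2)).2
            rw [← hfi_eq] at this
            rw [this]
          · rw [if_neg hab]
            exact Set.subset_union_left
        have hvg : ∀ k, v ∈ support (if s(a, b) ∈ f k then
            s(v, a) ::ₘ s(v, b) ::ₘ (f k).erase s(a, b) else f k) → s(a, b) ∈ f k := by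
          intro k hvk
          by_contra hab
          rw [if_neg hab] at hvk
          obtain ⟨e, he, hv⟩ := hvk
          exact hvfi k e he hv
        rw [Set.disjoint_left]
        intro x hx hx'
        by_cases hxv : x = v
        · subst hxv
          have habi := hvg i hx
          have habj := hvg j hx'
          exact Set.disjoint_left.mp (hfd i j hij)
            (show a ∈ support (f i) from ⟨s(a, b), habi, by simp⟩)
            (show a ∈ support (f j) from ⟨s(a, b), habj, by simp⟩)
        · have hxi : x ∈ support (f i) := by
            rcases hgsup i hx with h | h
            · exact h
            · exact absurd h hxv
          have hxj : x ∈ support (f j) := by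
            rcases hgsup j hx' with h | h
            · exact h
            · exact absurd h hxv
          exact Set.disjoint_left.mp (hfd i j hij) hxi hxj
    exact handler H 0 0 v hsubH hplH hsupH hvsup hvH hf (by omega) (by omega)
end

section
/- Let G be a graph with a 2-edge-cut {u1u2, v1v2}, where G − {u1u2, v1v2} has components G1 (containing u1, v1) and G2 (containing u2, v2). Let G1' = G1 + u1v1. If S is a feedback vertex set of G1' and S' is a feedback vertex set of G2, then S ∪ S' is a feedback vertex set of G; hence fvs(G) ≤ fvs(G1') + fvs(G2). -/
/- A multigraph on vertex type `V` is represented by its multiset of edges,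
   each edge being an unordered pair (`Sym2 V`); loops are `s(v, v)` and
   parallel edges are repeated elements of the multiset. -/

open Classical

section Helpers

open Multiset

variable {V : Type*} {α β : Type*}

lemma MGaux.deg_cons (e : Sym2 V) (M : Multiset (Sym2 V)) (v : V) :
    MG.deg (e ::ₘ M) v = (if e = s(v, v) then 2 else if v ∈ e then 1 else 0) + MG.deg M v := by
  simp [MG.deg]

lemma MGaux.deg_add (M N : Multiset (Sym2 V)) (v : V) :
    MG.deg (M + N) v = MG.deg M v + MG.deg N v := by
  simp [MG.deg]

lemma MGaux.deg_zero (v : V) : MG.deg (0 : Multiset (Sym2 V)) v = 0 := rfl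

lemma MGaux.reach_symm {M : Multiset (Sym2 V)} {a b : V} (h : MG.Reach M a b) :
    MG.Reach M b a :=
  (@Relation.ReflTransGen.symmetric _ (MG.Adj M)
    ⟨fun x y (hxy : MG.Adj M x y) => by rwa [MG.Adj, Sym2.eq_swap] at hxy⟩).symm _ _ h

lemma MGaux.sum_swap' (M : Multiset α) (T : Finset β) (g : α → β → ℕ) :
    ∑ v ∈ T, (M.map fun e => g e v).sum = (M.map fun e => ∑ v ∈ T, g e v).sum := by
  induction M using Multiset.induction with
  | empty => simp
  | cons a s ih => simp [Finset.sum_add_distrib, ih]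

/-- The finite set of vertices touched by a multigraph. -/
noncomputable def MGaux.verts (M : Multiset (Sym2 V)) : Finset V :=
  M.toFinset.biUnion fun e => {e.out.1, e.out.2}

lemma MGaux.mem_verts {M : Multiset (Sym2 V)} {v : V} :
    v ∈ MGaux.verts M ↔ ∃ e ∈ M, v ∈ e := by
  simp only [MGaux.verts, Finset.mem_biUnion, Multiset.mem_toFinset, Finset.mem_insert,
    Finset.mem_singleton]
  constructor
  · rintro ⟨e, he, (rfl | rfl)⟩
    exacts [⟨e, he, Sym2.out_fst_mem e⟩, ⟨e, he, Sym2.out_snd_mem e⟩]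
  · rintro ⟨e, he, hv⟩
    refine ⟨e, he, ?_⟩
    have h2 : s(e.out.1, e.out.2) = e := by rw [Sym2.mk]; exact e.out_eq
    rw [← h2, Sym2.mem_iff] at hv
    exact hv

lemma MGaux.exists_forest_delete (M : Multiset (Sym2 V)) :
    ∃ S : Finset V, MG.IsForest (MG.deleteVerts M ↑S) := by
  refine ⟨MGaux.verts M, fun C hC hcyc => ?_⟩
  have h0 : MG.deleteVerts M ↑(MGaux.verts M) = 0 := by
    rw [MG.deleteVerts, Multiset.filter_eq_nil]
    intro e he h
    exact h e.out.1 (Sym2.out_fst_mem e) (by exact_mod_cast MGaux.mem_verts.mpr ⟨e, he, Sym2.out_fst_mem e⟩)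
  rw [h0] at hC
  exact hcyc.1 (Multiset.le_zero.mp hC)

end Helpers

section WgtHelpers

variable {V : Type*}

noncomputable def MGaux.wgt (s2 : Set V) : Sym2 V → ℕ :=
  Sym2.lift ⟨fun a b => (if a ∈ s2 then 1 else 0) + (if b ∈ s2 then 1 else 0),
    fun a b => add_comm _ _⟩

lemma MGaux.wgt_mk (s2 : Set V) (a b : V) :
    MGaux.wgt s2 s(a, b) = (if a ∈ s2 then 1 else 0) + (if b ∈ s2 then 1 else 0) :=
  Sym2.lift_mk _ _ _

lemma MGaux.wgt_zero {s2 : Set V} {e : Sym2 V} (h : ∀ v ∈ e, v ∉ s2) : MGaux.wgt s2 e = 0 := by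
  induction e using Sym2.ind with
  | _ a b =>
    rw [MGaux.wgt_mk, if_neg (h a (Sym2.mem_mk_left a b)), if_neg (h b (Sym2.mem_mk_right a b))]

lemma MGaux.wgt_two {s2 : Set V} {e : Sym2 V} (h : ∀ v ∈ e, v ∈ s2) : MGaux.wgt s2 e = 2 := by
  induction e using Sym2.ind with
  | _ a b =>
    rw [MGaux.wgt_mk, if_pos (h a (Sym2.mem_mk_left a b)), if_pos (h b (Sym2.mem_mk_right a b))]

end WgtHelpers

/-- For a 2-edge-cut `{u₁u₂, v₁v₂}` separating `G` into components `G1` (containing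
`u₁, v₁`) and `G2` (containing `u₂, v₂`), with `G1' = G1 + u₁v₁`: the union of a
feedback vertex set of `G1'` and one of `G2` is a feedback vertex set of `G`;
hence `fvs G ≤ fvs G1' + fvs G2`. -/
theorem fvs_two_edge_cut {V : Type*} (G G1 G2 : Multiset (Sym2 V)) (u1 v1 u2 v2 : V)
    (hG : G = s(u1, u2) ::ₘ s(v1, v2) ::ₘ (G1 + G2))
    (hdisj : Disjoint (MG.support G1) (MG.support G2))
    (hc1 : MG.Conn G1) (hc2 : MG.Conn G2)
    (hu1 : u1 ∈ MG.support G1) (hv1 : v1 ∈ MG.support G1)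
    (hu2 : u2 ∈ MG.support G2) (hv2 : v2 ∈ MG.support G2) :
    (∀ S S' : Finset V,
      MG.IsForest (MG.deleteVerts (s(u1, v1) ::ₘ G1) ↑S) →
      MG.IsForest (MG.deleteVerts G2 ↑S') →
      MG.IsForest (MG.deleteVerts G ↑(S ∪ S'))) ∧
    MG.fvs G ≤ MG.fvs (s(u1, v1) ::ₘ G1) + MG.fvs G2 := by
  have hS1 : ∀ v ∈ MG.support G1, v ∉ MG.support G2 := fun v hv => Set.disjoint_left.mp hdisj hv
  have hu2n : u2 ∉ MG.support G1 := fun h => hS1 u2 h hu2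
  have hv2n : v2 ∉ MG.support G1 := fun h => hS1 v2 h hv2
  have hu1n : u1 ∉ MG.support G2 := hS1 u1 hu1
  have hv1n : v1 ∉ MG.support G2 := hS1 v1 hv1
  have hG1supp : ∀ e ∈ G1, ∀ v ∈ e, v ∈ MG.support G1 := fun e he v hv => ⟨e, he, hv⟩
  have hG2supp : ∀ e ∈ G2, ∀ v ∈ e, v ∈ MG.support G2 := fun e he v hv => ⟨e, he, hv⟩
  have hAG1 : s(u1, u2) ∉ G1 := fun h => hu2n (hG1supp _ h u2 (Sym2.mem_mk_right u1 u2))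
  have hAG2 : s(u1, u2) ∉ G2 := fun h => hu1n (hG2supp _ h u1 (Sym2.mem_mk_left u1 u2))
  have hBG1 : s(v1, v2) ∉ G1 := fun h => hv2n (hG1supp _ h v2 (Sym2.mem_mk_right v1 v2))
  have hBG2 : s(v1, v2) ∉ G2 := fun h => hv1n (hG2supp _ h v1 (Sym2.mem_mk_left v1 v2))
  have main : ∀ S S' : Finset V,
      MG.IsForest (MG.deleteVerts (s(u1, v1) ::ₘ G1) ↑S) →
      MG.IsForest (MG.deleteVerts G2 ↑S') →
      MG.IsForest (MG.deleteVerts G ↑(S ∪ S')) := by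
    intro S S' hF1 hF2 C hC hcyc
    have hCG : C ≤ G := le_trans hC (Multiset.filter_le _ _)
    have hCpred : ∀ e ∈ C, ∀ v ∈ e, v ∉ (↑(S ∪ S') : Set V) :=
      fun e he => (Multiset.mem_filter.mp (Multiset.mem_of_le hC he)).2
    have hmemG : ∀ e ∈ C, e = s(u1, u2) ∨ e = s(v1, v2) ∨ e ∈ G1 ∨ e ∈ G2 := by
      intro e he
      have h := Multiset.mem_of_le hCG he
      rw [hG] at h
      rcases Multiset.mem_cons.mp h with h | h
      · exact Or.inl h
      rcases Multiset.mem_cons.mp h with h | h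
      · exact Or.inr (Or.inl h)
      rcases Multiset.mem_add.mp h with h | h
      exacts [Or.inr (Or.inr (Or.inl h)), Or.inr (Or.inr (Or.inr h))]
    set Ccut := C.filter (fun e => e = s(u1, u2) ∨ e = s(v1, v2)) with hCcut_def
    set Crest := C.filter (fun e => ¬(e = s(u1, u2) ∨ e = s(v1, v2))) with hCrest_def
    set D1 := Crest.filter (fun e => ∀ v ∈ e, v ∈ MG.support G1) with hD1_def
    set D2 := Crest.filter (fun e => ¬∀ v ∈ e, v ∈ MG.support G1) with hD2_def
    have hpart : Ccut + (D1 + D2) = C := by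
      rw [hD1_def, hD2_def, Multiset.filter_add_not, hCcut_def, hCrest_def,
        Multiset.filter_add_not]
    have hCcutC : Ccut ≤ C := Multiset.filter_le _ _
    have hD1C : D1 ≤ C := le_trans (Multiset.filter_le _ _) (Multiset.filter_le _ _)
    have hD2C : D2 ≤ C := le_trans (Multiset.filter_le _ _) (Multiset.filter_le _ _)
    have hmemCsplit : ∀ e ∈ C, e ∈ Ccut ∨ e ∈ D1 ∨ e ∈ D2 := by
      intro e he
      rw [← hpart] at he
      rcases Multiset.mem_add.mp he with h | h
      · exact Or.inl h
      rcases Multiset.mem_add.mp h with h | h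
      exacts [Or.inr (Or.inl h), Or.inr (Or.inr h)]
    have hD1p : ∀ e ∈ D1, ∀ v ∈ e, v ∈ MG.support G1 := fun e he => (Multiset.mem_filter.mp he).2
    have hCrestnc : ∀ e ∈ Crest, ¬(e = s(u1, u2) ∨ e = s(v1, v2)) :=
      fun e he => (Multiset.mem_filter.mp he).2
    have hD2G2 : ∀ e ∈ D2, e ∈ G2 := by
      intro e he
      have hnc := hCrestnc e (Multiset.mem_of_le (Multiset.filter_le _ _) he)
      have hnp1 := (Multiset.mem_filter.mp he).2
      rcases hmemG e (Multiset.mem_of_le hD2C he) with h | h | h | h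
      · exact absurd (Or.inl h) hnc
      · exact absurd (Or.inr h) hnc
      · exact absurd (hG1supp e h) hnp1
      · exact h
    have hD2supp : ∀ e ∈ D2, ∀ v ∈ e, v ∈ MG.support G2 := fun e he => hG2supp e (hD2G2 e he)
    -- the vertex set of C inside support G2
    set T := (MGaux.verts C).filter (fun v => v ∈ MG.support G2) with hT_def
    have hTiff : ∀ v, (∃ e ∈ C, v ∈ e) → (v ∈ T ↔ v ∈ MG.support G2) := by
      intro v hv
      rw [hT_def, Finset.mem_filter]
      exact ⟨fun h => h.2, fun h => ⟨MGaux.mem_verts.mpr hv, h⟩⟩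
    have hTC : ∀ v ∈ T, v ∈ MG.support C := by
      intro v hv
      rw [hT_def, Finset.mem_filter, MGaux.mem_verts] at hv
      exact hv.1
    have hedge : ∀ e ∈ C,
        (∑ v ∈ T, if e = s(v, v) then 2 else if v ∈ e then 1 else 0)
          = MGaux.wgt (MG.support G2) e := by
      intro e he
      revert he
      induction e using Sym2.ind with
      | _ a b =>
        intro he
        have haT : a ∈ T ↔ a ∈ MG.support G2 := hTiff a ⟨_, he, Sym2.mem_mk_left a b⟩
        have hbT : b ∈ T ↔ b ∈ MG.support G2 := hTiff b ⟨_, he, Sym2.mem_mk_right a b⟩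
        by_cases hab : a = b
        · subst hab
          have hsum : ∀ v ∈ T,
              (if s(a, a) = s(v, v) then 2 else if v ∈ s(a, a) then 1 else 0)
                = if v = a then 2 else 0 := by
            intro v _
            rcases eq_or_ne v a with rfl | hva
            · simp
            · have h1 : s(a, a) ≠ s(v, v) := by
                intro hq
                rw [Sym2.eq_iff] at hq
                rcases hq with ⟨h, -⟩ | ⟨h, -⟩ <;> exact hva h.symm
              have h2 : v ∉ s(a, a) := by
                rw [Sym2.mem_iff]
                rintro (h | h) <;> exact hva h
              simp [h1, h2, hva]
          rw [Finset.sum_congr rfl hsum, Finset.sum_ite_eq' T a (fun _ => 2), MGaux.wgt_mk]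
          by_cases h : a ∈ MG.support G2 <;> simp [haT, h]
        · have hsum : ∀ v ∈ T,
              (if s(a, b) = s(v, v) then 2 else if v ∈ s(a, b) then 1 else 0)
                = (if v = a then 1 else 0) + (if v = b then 1 else 0) := by
            intro v _
            have h1 : s(a, b) ≠ s(v, v) := by
              intro hq
              rw [Sym2.eq_iff] at hq
              rcases hq with ⟨h, h'⟩ | ⟨h, h'⟩ <;> exact hab (h.trans h'.symm)
            rw [if_neg h1]
            rcases eq_or_ne v a with rfl | hva
            · simp [hab]
            · rcases eq_or_ne v b with rfl | hvb
              · simp [hva]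
              · have h2 : v ∉ s(a, b) := by
                  rw [Sym2.mem_iff]
                  rintro (h | h)
                  exacts [hva h, hvb h]
                simp [h2, hva, hvb]
          rw [Finset.sum_congr rfl hsum, Finset.sum_add_distrib,
            Finset.sum_ite_eq' T a (fun _ => 1), Finset.sum_ite_eq' T b (fun _ => 1),
            MGaux.wgt_mk]
          simp only [haT, hbT]
    have hswap : ∑ v ∈ T, MG.deg C v = (C.map (MGaux.wgt (MG.support G2))).sum := by
      have h1 : ∑ v ∈ T, MG.deg C v
          = (C.map fun e => ∑ v ∈ T, if e = s(v, v) then 2 else if v ∈ e then 1 else 0).sum := by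
        simp only [MG.deg]
        exact MGaux.sum_swap' C T _
      rw [h1]
      exact congrArg _ (Multiset.map_congr rfl hedge)
    have hdegT : ∀ v ∈ T, MG.deg C v = 2 := fun v hv => hcyc.2.2 v (hTC v hv)
    have hFC : (C.map (MGaux.wgt (MG.support G2))).sum = 2 * T.card := by
      rw [← hswap, Finset.sum_congr rfl hdegT, Finset.sum_const, smul_eq_mul, mul_comm]
    have hFD1 : (D1.map (MGaux.wgt (MG.support G2))).sum = 0 := by
      apply Multiset.sum_eq_zero
      intro x hx
      obtain ⟨e, he, rfl⟩ := Multiset.mem_map.mp hx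
      exact MGaux.wgt_zero (fun v hv hv2 => hS1 v (hD1p e he v hv) hv2)
    have hFD2 : (D2.map (MGaux.wgt (MG.support G2))).sum = 2 * Multiset.card D2 := by
      have h := Multiset.map_congr (f := MGaux.wgt (MG.support G2)) (g := fun _ => 2) rfl
        (fun e he => MGaux.wgt_two (hD2supp e he))
      rw [h, Multiset.map_const', Multiset.sum_replicate, smul_eq_mul, mul_comm]
    have hWA : MGaux.wgt (MG.support G2) s(u1, u2) = 1 := by
      rw [MGaux.wgt_mk, if_neg hu1n, if_pos hu2]
    have hWB : MGaux.wgt (MG.support G2) s(v1, v2) = 1 := by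
      rw [MGaux.wgt_mk, if_neg hv1n, if_pos hv2]
    have hWcut : ∀ e ∈ Ccut, MGaux.wgt (MG.support G2) e = 1 := by
      intro e he
      rcases (Multiset.mem_filter.mp he).2 with h | h <;> rw [h]
      exacts [hWA, hWB]
    have hFCcut : (Ccut.map (MGaux.wgt (MG.support G2))).sum = Multiset.card Ccut := by
      have h := Multiset.map_congr (f := MGaux.wgt (MG.support G2)) (g := fun _ => 1) rfl hWcut
      rw [h, Multiset.map_const', Multiset.sum_replicate, smul_eq_mul, mul_one]
    have hFsplit : (C.map (MGaux.wgt (MG.support G2))).sum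
        = (Ccut.map (MGaux.wgt (MG.support G2))).sum
          + ((D1.map (MGaux.wgt (MG.support G2))).sum
            + (D2.map (MGaux.wgt (MG.support G2))).sum) := by
      conv_lhs => rw [← hpart]
      rw [Multiset.map_add, Multiset.map_add, Multiset.sum_add, Multiset.sum_add]
    have hparity : 2 * T.card = Multiset.card Ccut + 2 * Multiset.card D2 := by
      rw [← hFC, hFsplit, hFCcut, hFD1, hFD2]
      omega
    have hCcutle : Ccut ≤ (s(u1, u2) ::ₘ s(v1, v2) ::ₘ 0) := by
      have h1 : Ccut ≤ G.filter (fun e => e = s(u1, u2) ∨ e = s(v1, v2)) :=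
        Multiset.filter_le_filter _ hCG
      have h2 : G.filter (fun e => e = s(u1, u2) ∨ e = s(v1, v2))
          = s(u1, u2) ::ₘ s(v1, v2) ::ₘ 0 := by
        rw [hG, Multiset.filter_cons_of_pos (p := fun e => e = s(u1, u2) ∨ e = s(v1, v2)) _
            (Or.inl rfl),
          Multiset.filter_cons_of_pos (p := fun e => e = s(u1, u2) ∨ e = s(v1, v2)) _
            (Or.inr rfl)]
        congr 2
        rw [Multiset.filter_eq_nil]
        intro e he
        rcases Multiset.mem_add.mp he with h | h
        · rintro (rfl | rfl)
          exacts [hAG1 h, hBG1 h]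
        · rintro (rfl | rfl)
          exacts [hAG2 h, hBG2 h]
      exact h2 ▸ h1
    have hcard2 : Multiset.card Ccut ≤ 2 := by
      have h := Multiset.card_le_card hCcutle
      simpa using h
    have hcases : Multiset.card Ccut = 0 ∨ Multiset.card Ccut = 2 := by omega
    rcases hcases with h0 | h2
    · -- no cut edge in C
      have hCcut0 : Ccut = 0 := Multiset.card_eq_zero.mp h0
      have hnc : ∀ e ∈ C, ¬(e = s(u1, u2) ∨ e = s(v1, v2)) := by
        intro e he hp
        have h : e ∈ Ccut := Multiset.mem_filter.mpr ⟨he, hp⟩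
        rw [hCcut0] at h
        exact absurd h (Multiset.notMem_zero e)
      have hmono : ∀ x y, MG.Reach C x y → x ∈ MG.support G1 → y ∈ MG.support G1 := by
        intro x y h
        induction h using Relation.ReflTransGen.head_induction_on with
        | refl => exact id
        | @head x' c hadj hrest ih =>
          intro hx
          have hec : s(x', c) ∈ C := hadj
          rcases hmemCsplit _ hec with hcut | hd1 | hd2
          · exact absurd (Multiset.mem_filter.mp hcut).2 (hnc _ (Multiset.mem_filter.mp hcut).1)
          · exact ih (hD1p _ hd1 c (Sym2.mem_mk_right _ _))
          · exact absurd (hD2supp _ hd2 x' (Sym2.mem_mk_left _ _)) (hS1 x' hx)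
      by_cases hD2e : D2 = 0
      · have hCp1 : ∀ e ∈ C, ∀ v ∈ e, v ∈ MG.support G1 := by
          intro e he
          rcases hmemCsplit e he with h | h | h
          · rw [hCcut0] at h; exact absurd h (Multiset.notMem_zero e)
          · exact hD1p e h
          · rw [hD2e] at h; exact absurd h (Multiset.notMem_zero e)
        have hCG1 : C ≤ G1 := by
          rw [Multiset.le_iff_count]
          intro e
          by_cases heC : e ∈ C
          · have h1 : Multiset.count e C ≤ Multiset.count e G := Multiset.count_le_of_le e hCG
            have hne1 : e ≠ s(u1, u2) := fun h => hnc e heC (Or.inl h)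
            have hne2 : e ≠ s(v1, v2) := fun h => hnc e heC (Or.inr h)
            have hneG2 : e ∉ G2 := fun h =>
              hS1 e.out.1 (hCp1 e heC _ (Sym2.out_fst_mem e)) (hG2supp e h _ (Sym2.out_fst_mem e))
            rw [hG, Multiset.count_cons_of_ne hne1, Multiset.count_cons_of_ne hne2,
              Multiset.count_add, Multiset.count_eq_zero.mpr hneG2] at h1
            simpa using h1
          · simp [Multiset.count_eq_zero.mpr heC]
        have hle : C ≤ MG.deleteVerts (s(u1, v1) ::ₘ G1) ↑S := by
          rw [MG.deleteVerts, Multiset.le_filter]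
          refine ⟨le_trans hCG1 (Multiset.le_cons_self _ _), fun e he v hv hvS => ?_⟩
          exact hCpred e he v hv (by rw [Finset.coe_union]; exact Or.inl hvS)
        exact hF1 C hle hcyc
      · have hD1e : D1 = 0 := by
          by_contra hne
          obtain ⟨e1, he1⟩ := Multiset.exists_mem_of_ne_zero hne
          obtain ⟨e2, he2⟩ := Multiset.exists_mem_of_ne_zero hD2e
          have ha1 : e1.out.1 ∈ MG.support G1 := hD1p e1 he1 _ (Sym2.out_fst_mem e1)
          have hb1 : e2.out.1 ∈ MG.support G2 := hD2supp e2 he2 _ (Sym2.out_fst_mem e2)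
          have hreach : MG.Reach C e1.out.1 e2.out.1 :=
            hcyc.2.1.2 _ ⟨e1, Multiset.mem_of_le hD1C he1, Sym2.out_fst_mem e1⟩ _
              ⟨e2, Multiset.mem_of_le hD2C he2, Sym2.out_fst_mem e2⟩
          exact hS1 _ (hmono _ _ hreach ha1) hb1
        have hCp2 : ∀ e ∈ C, e ∈ G2 := by
          intro e he
          rcases hmemCsplit e he with h | h | h
          · rw [hCcut0] at h; exact absurd h (Multiset.notMem_zero e)
          · rw [hD1e] at h; exact absurd h (Multiset.notMem_zero e)
          · exact hD2G2 e h
        have hCG2 : C ≤ G2 := by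
          rw [Multiset.le_iff_count]
          intro e
          by_cases heC : e ∈ C
          · have h1 : Multiset.count e C ≤ Multiset.count e G := Multiset.count_le_of_le e hCG
            have hneG1 : e ∉ G1 := fun h =>
              hS1 e.out.1 (hG1supp e h _ (Sym2.out_fst_mem e))
                (hG2supp e (hCp2 e heC) _ (Sym2.out_fst_mem e))
            rw [hG, Multiset.count_cons_of_ne (fun h => hnc e heC (Or.inl h)),
              Multiset.count_cons_of_ne (fun h => hnc e heC (Or.inr h)),
              Multiset.count_add, Multiset.count_eq_zero.mpr hneG1] at h1
            simpa using h1
          · simp [Multiset.count_eq_zero.mpr heC]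
        have hle : C ≤ MG.deleteVerts G2 ↑S' := by
          rw [MG.deleteVerts, Multiset.le_filter]
          refine ⟨hCG2, fun e he v hv hvS => ?_⟩
          exact hCpred e he v hv (by rw [Finset.coe_union]; exact Or.inr hvS)
        exact hF2 C hle hcyc
    · -- both cut edges in C
      have hCcut_eq : Ccut = s(u1, u2) ::ₘ s(v1, v2) ::ₘ 0 :=
        Multiset.eq_of_le_of_card_le hCcutle (by simp [h2])
      have hACcut : s(u1, u2) ∈ Ccut := by rw [hCcut_eq]; exact Multiset.mem_cons_self _ _
      have hBCcut : s(v1, v2) ∈ Ccut := by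
        rw [hCcut_eq]; exact Multiset.mem_cons_of_mem (Multiset.mem_cons_self _ _)
      have hAC : s(u1, u2) ∈ C := Multiset.mem_of_le hCcutC hACcut
      have hBC : s(v1, v2) ∈ C := Multiset.mem_of_le hCcutC hBCcut
      have hu1S : u1 ∉ (↑(S ∪ S') : Set V) := hCpred _ hAC u1 (Sym2.mem_mk_left _ _)
      have hv1S : v1 ∉ (↑(S ∪ S') : Set V) := hCpred _ hBC v1 (Sym2.mem_mk_left _ _)
      have hD1G1 : D1 ≤ G1 := by
        rw [Multiset.le_iff_count]
        intro e
        by_cases heD : e ∈ D1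
        · have heC : e ∈ C := Multiset.mem_of_le hD1C heD
          have hnc : ¬(e = s(u1, u2) ∨ e = s(v1, v2)) :=
            hCrestnc e (Multiset.mem_of_le (Multiset.filter_le _ _) heD)
          have hcnt1 : Multiset.count e D1 ≤ Multiset.count e C := Multiset.count_le_of_le e hD1C
          have hcnt2 : Multiset.count e C ≤ Multiset.count e G := Multiset.count_le_of_le e hCG
          have hneG2 : e ∉ G2 := fun h =>
            hS1 e.out.1 (hD1p e heD _ (Sym2.out_fst_mem e)) (hG2supp e h _ (Sym2.out_fst_mem e))
          rw [hG, Multiset.count_cons_of_ne (fun h => hnc (Or.inl h)),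
            Multiset.count_cons_of_ne (fun h => hnc (Or.inr h)),
            Multiset.count_add, Multiset.count_eq_zero.mpr hneG2] at hcnt2
          omega
        · simp [Multiset.count_eq_zero.mpr heD]
      set C' := s(u1, v1) ::ₘ D1 with hC'_def
      have hC'le : C' ≤ MG.deleteVerts (s(u1, v1) ::ₘ G1) ↑S := by
        rw [MG.deleteVerts, Multiset.le_filter, hC'_def]
        constructor
        · exact Multiset.cons_le_cons _ hD1G1
        · intro e he
          rcases Multiset.mem_cons.mp he with rfl | hd
          · intro v hv
            rcases Sym2.mem_iff.mp hv with rfl | rfl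
            · exact fun hvS => hu1S (by rw [Finset.coe_union]; exact Or.inl hvS)
            · exact fun hvS => hv1S (by rw [Finset.coe_union]; exact Or.inl hvS)
          · exact fun v hv hvS =>
              hCpred e (Multiset.mem_of_le hD1C hd) v hv
                (by rw [Finset.coe_union]; exact Or.inl hvS)
      apply hF1 C' hC'le
      have hAdjuv : MG.Adj C' u1 v1 := by
        show s(u1, v1) ∈ C'
        rw [hC'_def]
        exact Multiset.mem_cons_self _ _
      have hAdjvu : MG.Adj C' v1 u1 := by
        show s(v1, u1) ∈ C'
        rw [show s(v1, u1) = s(u1, v1) from Sym2.eq_swap]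
        exact hAdjuv
      have hR12 : MG.Reach C' u1 v1 := Relation.ReflTransGen.single hAdjuv
      have hR21 : MG.Reach C' v1 u1 := Relation.ReflTransGen.single hAdjvu
      have huvR : ∀ x y : V, (x = u1 ∨ x = v1) → (y = u1 ∨ y = v1) → MG.Reach C' x y := by
        rintro x y (rfl | rfl) (rfl | rfl)
        exacts [Relation.ReflTransGen.refl, hR12, hR21, Relation.ReflTransGen.refl]
      have key : ∀ a b : V, MG.Reach C a b → b ∈ MG.support G1 →
          ((a ∈ MG.support G1 → MG.Reach C' a b) ∧
            (a ∈ MG.support G2 → ∃ d, (d = u1 ∨ d = v1) ∧ MG.Reach C' d b)) := by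
        intro a b h hb
        induction h using Relation.ReflTransGen.head_induction_on with
        | refl => exact ⟨fun _ => Relation.ReflTransGen.refl, fun hb2 => absurd hb2 (hS1 b hb)⟩
        | @head x c hadj hrest ih =>
          have hec : s(x, c) ∈ C := hadj
          rcases hmemCsplit _ hec with hcut | hd1 | hd2
          · rcases (Multiset.mem_filter.mp hcut).2 with hXA | hXB
            · rcases Sym2.eq_iff.mp hXA with ⟨hxa, hca⟩ | ⟨hxa, hca⟩
              · constructor
                · intro _
                  obtain ⟨d, hd, hr⟩ := ih.2 (by rw [hca]; exact hu2)
                  refine Relation.ReflTransGen.trans ?_ hr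
                  rw [hxa]
                  exact huvR u1 d (Or.inl rfl) hd
                · intro hx2
                  rw [hxa] at hx2
                  exact absurd hx2 (hS1 u1 hu1)
              · constructor
                · intro hx1
                  rw [hxa] at hx1
                  exact (hS1 u2 hx1 hu2).elim
                · intro _
                  exact ⟨c, Or.inl hca, ih.1 (by rw [hca]; exact hu1)⟩
            · rcases Sym2.eq_iff.mp hXB with ⟨hxa, hca⟩ | ⟨hxa, hca⟩
              · constructor
                · intro _
                  obtain ⟨d, hd, hr⟩ := ih.2 (by rw [hca]; exact hv2)
                  refine Relation.ReflTransGen.trans ?_ hr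
                  rw [hxa]
                  exact huvR v1 d (Or.inr rfl) hd
                · intro hx2
                  rw [hxa] at hx2
                  exact absurd hx2 (hS1 v1 hv1)
              · constructor
                · intro hx1
                  rw [hxa] at hx1
                  exact (hS1 v2 hx1 hv2).elim
                · intro _
                  exact ⟨c, Or.inr hca, ih.1 (by rw [hca]; exact hv1)⟩
          · have hx1 : x ∈ MG.support G1 := hD1p _ hd1 x (Sym2.mem_mk_left _ _)
            have hc1' : c ∈ MG.support G1 := hD1p _ hd1 c (Sym2.mem_mk_right _ _)
            refine ⟨fun _ => Relation.ReflTransGen.head ?_ (ih.1 hc1'),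
              fun hx2 => (hS1 x hx1 hx2).elim⟩
            show s(x, c) ∈ C'
            rw [hC'_def]
            exact Multiset.mem_cons_of_mem hd1
          · have hx2 : x ∈ MG.support G2 := hD2supp _ hd2 x (Sym2.mem_mk_left _ _)
            have hc2' : c ∈ MG.support G2 := hD2supp _ hd2 c (Sym2.mem_mk_right _ _)
            exact ⟨fun hx1 => (hS1 x hx1 hx2).elim, fun _ => ih.2 hc2'⟩
      have hu1C : u1 ∈ MG.support C := ⟨_, hAC, Sym2.mem_mk_left _ _⟩
      have htoU1 : ∀ a ∈ MG.support C', MG.Reach C' a u1 := by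
        intro a ha
        obtain ⟨e, he, hae⟩ := ha
        rw [hC'_def] at he
        rcases Multiset.mem_cons.mp he with rfl | hd
        · refine huvR a u1 ?_ (Or.inl rfl)
          rcases Sym2.mem_iff.mp hae with h | h
          exacts [Or.inl h, Or.inr h]
        · have haG1 : a ∈ MG.support G1 := hD1p _ hd a hae
          have haC : a ∈ MG.support C := ⟨e, Multiset.mem_of_le hD1C hd, hae⟩
          exact (key a u1 (hcyc.2.1.2 a haC u1 hu1C) hu1).1 haG1
      refine ⟨by rw [hC'_def]; exact Multiset.cons_ne_zero, ⟨⟨u1, ?_⟩, ?_⟩, ?_⟩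
      · exact ⟨s(u1, v1), by rw [hC'_def]; exact Multiset.mem_cons_self _ _,
          Sym2.mem_mk_left _ _⟩
      · exact fun a ha b hb => (htoU1 a ha).trans (MGaux.reach_symm (htoU1 b hb))
      · -- degrees
        intro v hv
        obtain ⟨e, he, hve⟩ := hv
        rw [hC'_def] at he
        have hvfacts : v ∈ MG.support G1 ∧ v ∈ MG.support C := by
          rcases Multiset.mem_cons.mp he with h | hd
          · subst h
            rcases Sym2.mem_iff.mp hve with h | h <;> rw [h]
            exacts [⟨hu1, ⟨_, hAC, Sym2.mem_mk_left _ _⟩⟩, ⟨hv1, ⟨_, hBC, Sym2.mem_mk_left _ _⟩⟩]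
          · exact ⟨hD1p e hd v hve, ⟨e, Multiset.mem_of_le hD1C hd, hve⟩⟩
        obtain ⟨hvG1, hvC⟩ := hvfacts
        have h2v : MG.deg C v = 2 := hcyc.2.2 v hvC
        have hvu2 : v ≠ u2 := fun h => hS1 v hvG1 (h ▸ hu2)
        have hvv2 : v ≠ v2 := fun h => hS1 v hvG1 (h ▸ hv2)
        have hsplit : MG.deg C v = MG.deg Ccut v + (MG.deg D1 v + MG.deg D2 v) := by
          conv_lhs => rw [← hpart]
          rw [MGaux.deg_add, MGaux.deg_add]
        have hD2z : MG.deg D2 v = 0 := by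
          simp only [MG.deg]
          apply Multiset.sum_eq_zero
          intro x hx
          obtain ⟨e', he', rfl⟩ := Multiset.mem_map.mp hx
          have hve' : v ∉ e' := fun h => hS1 v hvG1 (hD2supp e' he' v h)
          rw [if_neg, if_neg hve']
          intro h
          exact hve' (h ▸ Sym2.mem_mk_left v v)
        have hCcutdeg : MG.deg Ccut v = (if v = u1 then 1 else 0) + (if v = v1 then 1 else 0) := by
          rw [hCcut_eq, MGaux.deg_cons, MGaux.deg_cons, MGaux.deg_zero]
          have hA' : (if s(u1, u2) = s(v, v) then 2 else if v ∈ s(u1, u2) then 1 else 0)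
              = if v = u1 then 1 else 0 := by
            rw [if_neg]
            · rcases eq_or_ne v u1 with rfl | hvu1
              · rw [if_pos (Sym2.mem_mk_left _ _), if_pos rfl]
              · rw [if_neg, if_neg hvu1]
                rw [Sym2.mem_iff]
                rintro (h | h)
                exacts [hvu1 h, hvu2 h]
            · rw [Sym2.eq_iff]
              rintro (⟨-, h⟩ | ⟨-, h⟩) <;> exact hvu2 h.symm
          have hB' : (if s(v1, v2) = s(v, v) then 2 else if v ∈ s(v1, v2) then 1 else 0)
              = if v = v1 then 1 else 0 := by
            rw [if_neg]
            · rcases eq_or_ne v v1 with rfl | hvv1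
              · rw [if_pos (Sym2.mem_mk_left _ _), if_pos rfl]
              · rw [if_neg, if_neg hvv1]
                rw [Sym2.mem_iff]
                rintro (h | h)
                exacts [hvv1 h, hvv2 h]
            · rw [Sym2.eq_iff]
              rintro (⟨-, h⟩ | ⟨-, h⟩) <;> exact hvv2 h.symm
          rw [hA', hB']
          simp
        have hinduv : (if s(u1, v1) = s(v, v) then 2 else if v ∈ s(u1, v1) then 1 else 0)
            = (if v = u1 then 1 else 0) + (if v = v1 then 1 else 0) := by
          rcases eq_or_ne u1 v1 with huv | huv
          · subst huv
            rcases eq_or_ne v u1 with rfl | hv1'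
            · simp
            · have h1 : s(u1, u1) ≠ s(v, v) := by
                intro hq
                rw [Sym2.eq_iff] at hq
                rcases hq with ⟨h, -⟩ | ⟨h, -⟩ <;> exact hv1' h.symm
              have h2 : v ∉ s(u1, u1) := by
                rw [Sym2.mem_iff]
                rintro (h | h) <;> exact hv1' h
              simp [h1, h2, hv1']
          · have hnl : s(u1, v1) ≠ s(v, v) := by
              intro hq
              rw [Sym2.eq_iff] at hq
              rcases hq with ⟨h1', h2'⟩ | ⟨h1', h2'⟩ <;> exact huv (h1'.trans h2'.symm)
            rw [if_neg hnl]
            rcases eq_or_ne v u1 with rfl | h1'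
            · rw [if_pos (Sym2.mem_mk_left _ _)]
              simp [huv, (Ne.symm huv)]
            · rcases eq_or_ne v v1 with rfl | h2'
              · rw [if_pos (Sym2.mem_mk_right _ _)]
                simp [h1']
              · rw [if_neg, if_neg h1', if_neg h2']
                rw [Sym2.mem_iff]
                rintro (h | h)
                exacts [h1' h, h2' h]
        rw [hC'_def, MGaux.deg_cons, hinduv]
        rw [hCcutdeg, hD2z, h2v] at hsplit
        omega
  refine ⟨main, ?_⟩
  obtain ⟨S0, hS0⟩ := MGaux.exists_forest_delete (s(u1, v1) ::ₘ G1)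
  obtain ⟨T0, hT0⟩ := MGaux.exists_forest_delete G2
  have h1 : ∃ SA : Finset V, SA.card = MG.fvs (s(u1, v1) ::ₘ G1) ∧
      MG.IsForest (MG.deleteVerts (s(u1, v1) ::ₘ G1) ↑SA) := by
    have := Nat.sInf_mem (s := {n | ∃ S : Finset V, S.card = n ∧
      MG.IsForest (MG.deleteVerts (s(u1, v1) ::ₘ G1) ↑S)}) ⟨S0.card, S0, rfl, hS0⟩
    exact this
  have h2 : ∃ SB : Finset V, SB.card = MG.fvs G2 ∧
      MG.IsForest (MG.deleteVerts G2 ↑SB) := by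
    have := Nat.sInf_mem (s := {n | ∃ S : Finset V, S.card = n ∧
      MG.IsForest (MG.deleteVerts G2 ↑S)}) ⟨T0.card, T0, rfl, hT0⟩
    exact this
  obtain ⟨SA, hSAcard, hSAf⟩ := h1
  obtain ⟨SB, hSBcard, hSBf⟩ := h2
  have hle : MG.fvs G ≤ (SA ∪ SB).card :=
    Nat.sInf_le ⟨SA ∪ SB, rfl, main SA SB hSAf hSBf⟩
  calc MG.fvs G ≤ (SA ∪ SB).card := hle
    _ ≤ SA.card + SB.card := Finset.card_union_le _ _
    _ = MG.fvs (s(u1, v1) ::ₘ G1) + MG.fvs G2 := by rw [hSAcard, hSBcard]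
end

section
/- Let G be a graph with a 3-edge-cut {eA, eB, eC} separating G1 and G2, and suppose for some x ∈ {A,B,C} that both cp(G1^{BC-type graph obtained by joining the two attachments other than x}) = cp(G1) + 1 and likewise cp(G2 with the analogous added edge) = cp(G2) + 1. Then cp(G) ≥ cp(G1) + cp(G2) + 1. -/
/- A multigraph on vertex type `V` is represented by its multiset of edges,
   each edge being an unordered pair (`Sym2 V`); loops are `s(v, v)` and
   parallel edges are repeated elements of the multiset. -/

open Classical

namespace MGAux

open MG

variable {V : Type*}

lemma support_mono {H H' : Multiset (Sym2 V)} (h : H ≤ H') : support H ⊆ support H' := by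
  rintro v ⟨e, he, hv⟩; exact ⟨e, Multiset.mem_of_le h he, hv⟩

lemma deg_zero (v : V) : deg (0 : Multiset (Sym2 V)) v = 0 := by simp [deg]

lemma deg_cons (e : Sym2 V) (H : Multiset (Sym2 V)) (v : V) :
    deg (e ::ₘ H) v = (if e = s(v,v) then 2 else if v ∈ e then 1 else 0) + deg H v := by
  simp [deg, Multiset.map_cons, Multiset.sum_cons]

lemma deg_add (A B : Multiset (Sym2 V)) (v : V) :
    deg (A + B) v = deg A v + deg B v := by
  simp [deg]

lemma deg_eq_zero {H : Multiset (Sym2 V)} {v : V} (h : v ∉ support H) : deg H v = 0 := by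
  unfold deg
  rw [Multiset.sum_eq_zero]
  intro x hx
  obtain ⟨e, he, rfl⟩ := Multiset.mem_map.mp hx
  have hv : v ∉ e := fun hv => h ⟨e, he, hv⟩
  have hne : e ≠ s(v,v) := by rintro rfl; exact hv (by simp)
  simp [hne, hv]

lemma adj_symm {H : Multiset (Sym2 V)} : Symmetric (Adj H) := by
  intro a b h; unfold Adj at *; rwa [Sym2.eq_swap]

lemma reach_symm {H : Multiset (Sym2 V)} {a b : V} (h : Reach H a b) : Reach H b a :=
  by
    induction h with
    | refl => exact Relation.ReflTransGen.refl
    | tail _ hab ih => exact Relation.ReflTransGen.head (adj_symm hab) ih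

lemma reach_mono {H H' : Multiset (Sym2 V)} (h : H ≤ H') {a b : V} (hr : Reach H a b) :
    Reach H' a b :=
  Relation.ReflTransGen.mono (fun _ _ hxy => Multiset.mem_of_le h hxy) a b hr

end MGAux

namespace MGAux

open MG

variable {V : Type*}

lemma packing_sum_le {G : Multiset (Sym2 V)} {n : ℕ} {f : Fin n → Multiset (Sym2 V)}
    (hp : IsCyclePackingOn G f) : ∑ i, f i ≤ G := by
  classical
  rw [Multiset.le_iff_count]
  intro d
  rw [Multiset.count_sum']
  by_cases hd : ∃ i, d ∈ f i
  · obtain ⟨i, hi⟩ := hd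
    have hz : ∀ j ∈ Finset.univ, j ≠ i → Multiset.count d (f j) = 0 := by
      intro j _ hj
      by_contra hc
      have hdj : d ∈ f j := Multiset.count_pos.mp (Nat.pos_of_ne_zero hc)
      exact Set.disjoint_left.mp (hp.2 j i hj) ⟨d, hdj, d.out_fst_mem⟩ ⟨d, hi, d.out_fst_mem⟩
    rw [Finset.sum_eq_single_of_mem i (Finset.mem_univ i) hz]
    exact Multiset.le_iff_count.mp (hp.1 i).1 d
  · push_neg at hd
    have : ∀ j ∈ Finset.univ, Multiset.count d (f j) = 0 :=
      fun j _ => Multiset.count_eq_zero_of_notMem (hd j)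
    rw [Finset.sum_eq_zero this]
    exact Nat.zero_le _

lemma card_le_of_packing {G : Multiset (Sym2 V)} {n : ℕ} {f : Fin n → Multiset (Sym2 V)}
    (hp : IsCyclePackingOn G f) : n ≤ Multiset.card G := by
  have h2 := Multiset.card_le_card (packing_sum_le hp)
  have hcard : ∀ (s : Finset (Fin n)), Multiset.card (∑ i ∈ s, f i) = ∑ i ∈ s, Multiset.card (f i) := by
    intro s
    induction s using Finset.cons_induction with
    | empty => simp
    | cons a s ha ih => simp [Finset.sum_cons, ih]
  rw [hcard] at h2
  calc n = ∑ _i : Fin n, 1 := by simp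
    _ ≤ ∑ i, Multiset.card (f i) :=
        Finset.sum_le_sum fun i _ => Multiset.card_pos.mpr ((hp.1 i).2).1
    _ ≤ _ := h2

lemma bddAbove_packing (G : Multiset (Sym2 V)) :
    BddAbove {n | ∃ f : Fin n → Multiset (Sym2 V), IsCyclePackingOn G f} :=
  ⟨Multiset.card G, fun _n ⟨_f, hf⟩ => card_le_of_packing hf⟩

lemma zero_mem_packing (G : Multiset (Sym2 V)) :
    0 ∈ {n | ∃ f : Fin n → Multiset (Sym2 V), IsCyclePackingOn G f} :=
  ⟨fun i => i.elim0, fun i => i.elim0, fun i => i.elim0⟩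

lemma exists_packing_cp (G : Multiset (Sym2 V)) :
    ∃ f : Fin (cp G) → Multiset (Sym2 V), IsCyclePackingOn G f :=
  Nat.sSup_mem ⟨0, zero_mem_packing G⟩ (bddAbove_packing G)

lemma le_cp {G : Multiset (Sym2 V)} {n : ℕ}
    (h : ∃ f : Fin n → Multiset (Sym2 V), IsCyclePackingOn G f) : n ≤ cp G :=
  le_csSup (bddAbove_packing G) h

end MGAux

namespace MGAux

open MG

variable {V : Type*}

noncomputable def cf (d : Sym2 V) (v : V) : ℕ :=
  if d = s(v,v) then 2 else if v ∈ d then 1 else 0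

lemma sum_deg (H : Multiset (Sym2 V)) (S : Finset V) :
    ∑ v ∈ S, deg H v = (H.map fun d => ∑ v ∈ S, cf d v).sum := by
  induction H using Multiset.induction_on with
  | empty => simp [deg_zero]
  | cons e H ih =>
    simp only [Multiset.map_cons, Multiset.sum_cons, ← ih]
    rw [← Finset.sum_add_distrib]
    exact Finset.sum_congr rfl fun v _ => deg_cons e H v

lemma even_msum {s : Multiset ℕ} (h : ∀ x ∈ s, Even x) : Even s.sum := by
  induction s using Multiset.induction_on with
  | empty => simp
  | cons a s ih =>
    rw [Multiset.sum_cons]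
    exact (h a (Multiset.mem_cons_self a s)).add (ih fun x hx => h x (Multiset.mem_cons_of_mem hx))

lemma even_sum_cf {H : Multiset (Sym2 V)} {S : Finset V}
    (hcl : ∀ p q : V, Adj H p q → p ∈ S → q ∈ S) {d : Sym2 V} (hd : d ∈ H) :
    Even (∑ v ∈ S, cf d v) := by
  classical
  induction d using Sym2.ind with
  | _ p q =>
    by_cases hpq : p = q
    · subst hpq
      have hcf : ∀ v ∈ S, cf s(p,p) v = if v = p then 2 else 0 := by
        intro v _
        unfold cf
        by_cases hv : v = p
        · subst hv; simp
        · have h1 : s(p,p) ≠ s(v,v) := by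
            simp only [Sym2.eq_iff, ne_eq]
            tauto
          have h2 : v ∉ s(p,p) := by simp [Sym2.mem_iff, hv]
          simp [h1, h2, hv]
      rw [Finset.sum_congr rfl hcf, Finset.sum_ite_eq' S p (fun _ => 2)]
      split <;> simp
    · have hiff : (p ∈ S ↔ q ∈ S) := by
        constructor
        · exact fun h => hcl p q hd h
        · refine fun h => hcl q p ?_ h
          unfold Adj
          rwa [Sym2.eq_swap]
      have hcf : ∀ v ∈ S, cf s(p,q) v =
          (if v = p then 1 else 0) + (if v = q then 1 else 0) := by
        intro v _
        unfold cf
        have hne : s(p,q) ≠ s(v,v) := by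
          intro h
          rcases Sym2.eq_iff.mp h with ⟨rfl, rfl⟩ | ⟨rfl, rfl⟩ <;> exact hpq rfl
        rw [if_neg hne]
        have hqp : ¬ q = p := fun h => hpq h.symm
        by_cases hp : v = p
        · subst hp
          simp [Sym2.mem_iff, hpq]
        · by_cases hq : v = q <;> simp [Sym2.mem_iff, hp, hq, hqp]
      rw [Finset.sum_congr rfl hcf, Finset.sum_add_distrib,
        Finset.sum_ite_eq' S p (fun _ => 1), Finset.sum_ite_eq' S q (fun _ => 1)]
      by_cases hp : p ∈ S
      · simp [hp, hiff.mp hp]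
      · have hq : q ∉ S := fun h => hp (hiff.mpr h)
        simp [hp, hq]

lemma reach_erase_endpoints {C : Multiset (Sym2 V)} (hC : IsCycle C) {x y : V}
    (he : s(x,y) ∈ C) : Reach (C.erase s(x,y)) x y := by
  classical
  by_cases hxy : x = y
  · subst hxy; exact Relation.ReflTransGen.refl
  by_contra hne
  set E := C.erase s(x,y) with hE
  set T : Finset V := insert x (E.toFinset.biUnion fun d => {d.out.1, d.out.2}) with hT
  set S : Finset V := T.filter (fun v => Reach E x v) with hS
  have hmemT : ∀ {d : Sym2 V}, d ∈ E → ∀ {v : V}, v ∈ d → v ∈ T := by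
    intro d hd v hv
    have hd2 : d = s(d.out.1, d.out.2) := by conv_lhs => rw [← d.out_eq]
    rw [hd2, Sym2.mem_iff] at hv
    refine Finset.mem_insert_of_mem (Finset.mem_biUnion.mpr ⟨d, Multiset.mem_toFinset.mpr hd, ?_⟩)
    rcases hv with rfl | rfl <;> simp
  have hcl : ∀ p q : V, Adj E p q → p ∈ S → q ∈ S := by
    intro p q hadj hp
    rw [hS, Finset.mem_filter] at hp ⊢
    exact ⟨hmemT hadj (by simp [Sym2.mem_iff]),
      hp.2.trans (Relation.ReflTransGen.single hadj)⟩
  have hxS : x ∈ S := Finset.mem_filter.mpr ⟨Finset.mem_insert_self _ _, Relation.ReflTransGen.refl⟩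
  have hyS : y ∉ S := fun h => hne (Finset.mem_filter.mp h).2
  have hCE : C = s(x,y) ::ₘ E := (Multiset.cons_erase he).symm
  have hdegx : deg E x = 1 := by
    have h2 : deg C x = 2 := hC.2.2 x ⟨s(x,y), he, by simp⟩
    rw [hCE, deg_cons] at h2
    have hne1 : s(x,y) ≠ s(x,x) := by
      simp only [Sym2.eq_iff, ne_eq]
      tauto
    rw [if_neg hne1, if_pos (by simp)] at h2
    omega
  have hdegv : ∀ v ∈ S, v ≠ x → deg E v = 2 := by
    intro v hv hvx
    have hr : Reach E x v := (Finset.mem_filter.mp hv).2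
    obtain h | ⟨c, _, hc⟩ := hr.cases_tail
    · exact absurd h hvx
    · have hvC : v ∈ support C :=
        support_mono (Multiset.erase_le _ _) ⟨s(c,v), hc, by simp⟩
      have h2 : deg C v = 2 := hC.2.2 v hvC
      rw [hCE, deg_cons] at h2
      have hvy : v ≠ y := fun h => hyS (h ▸ hv)
      have hne1 : s(x,y) ≠ s(v,v) := by
        simp only [Sym2.eq_iff, ne_eq]
        tauto
      have hne2 : v ∉ s(x,y) := by simp [Sym2.mem_iff, hvx, hvy]
      rw [if_neg hne1, if_neg hne2] at h2
      omega
  have hodd : ∑ v ∈ S, deg E v = 2 * (S.erase x).card + 1 := by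
    rw [← Finset.sum_erase_add S _ hxS, hdegx]
    rw [Finset.sum_congr rfl
      (fun v hv => hdegv v (Finset.mem_of_mem_erase hv) (Finset.ne_of_mem_erase hv))]
    rw [Finset.sum_const, smul_eq_mul]
    ring
  have heven : Even (∑ v ∈ S, deg E v) := by
    rw [sum_deg]
    refine even_msum fun t ht => ?_
    obtain ⟨d, hd, rfl⟩ := Multiset.mem_map.mp ht
    exact even_sum_cf hcl hd
  rw [hodd] at heven
  obtain ⟨k, hk⟩ := heven
  omega

lemma reach_erase {C : Multiset (Sym2 V)} (hC : IsCycle C) {x y : V} (he : s(x,y) ∈ C)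
    {u v : V} (h : Reach C u v) : Reach (C.erase s(x,y)) u v := by
  classical
  have key : ∀ a b : V, Adj C a b → Reach (C.erase s(x,y)) a b := by
    intro a b hab
    by_cases h1 : s(a,b) = s(x,y)
    · rcases Sym2.eq_iff.mp h1 with ⟨rfl, rfl⟩ | ⟨rfl, rfl⟩
      · exact reach_erase_endpoints hC he
      · exact reach_symm (reach_erase_endpoints hC he)
    · exact Relation.ReflTransGen.single ((Multiset.mem_erase_of_ne h1).mpr hab)
  have h2 : Relation.ReflTransGen (Reach (C.erase s(x,y))) u v := Relation.ReflTransGen.mono key u v h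
  rwa [Reach, ← Relation.reflTransGen_idem (r := Adj (C.erase s(x,y)))]

end MGAux

namespace MGAux

open MG

variable {V : Type*}

lemma extract {e : Sym2 V} {G1 : Multiset (Sym2 V)} (h : cp (e ::ₘ G1) = cp G1 + 1) :
    ∃ (f : Fin (cp G1 + 1) → Multiset (Sym2 V)) (i : Fin (cp G1 + 1)),
      IsCyclePackingOn (e ::ₘ G1) f ∧ e ∈ f i ∧ (f i).erase e ≤ G1 ∧
        ∀ j, j ≠ i → f j ≤ G1 := by
  classical
  obtain ⟨f, hf⟩ : ∃ f : Fin (cp G1 + 1) → Multiset (Sym2 V),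
      IsCyclePackingOn (e ::ₘ G1) f := by
    have hx := exists_packing_cp (e ::ₘ G1)
    rwa [h] at hx
  by_cases hall : ∀ i, f i ≤ G1
  · exfalso
    have hle : cp G1 + 1 ≤ cp G1 := le_cp ⟨f, fun i => ⟨hall i, (hf.1 i).2⟩, hf.2⟩
    omega
  push_neg at hall
  obtain ⟨i, hi⟩ := hall
  have hfi : f i ≤ e ::ₘ G1 := (hf.1 i).1
  have hcnt : Multiset.count e (f i) = Multiset.count e G1 + 1 := by
    by_contra hc
    apply hi
    rw [Multiset.le_iff_count]
    intro d
    have h1 := Multiset.le_iff_count.mp hfi d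
    rw [Multiset.count_cons] at h1
    by_cases hd : d = e
    · subst hd
      have h1' : Multiset.count d (f i) ≤ Multiset.count d G1 + 1 := by simpa using h1
      omega
    · simpa [hd] using h1
  refine ⟨f, i, hf, Multiset.count_pos.mp (by omega), ?_, ?_⟩
  · rw [Multiset.le_iff_count]
    intro d
    by_cases hd : d = e
    · subst hd
      rw [Multiset.count_erase_self, hcnt]
      omega
    · rw [Multiset.count_erase_of_ne hd]
      have h1 := Multiset.le_iff_count.mp hfi d
      rwa [Multiset.count_cons_of_ne hd] at h1
  · intro j hj
    have hsum : ∑ k, f k ≤ e ::ₘ G1 := packing_sum_le hf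
    have h1 : Multiset.count e (f i) + Multiset.count e (f j) ≤
        Multiset.count e (e ::ₘ G1) := by
      have h2 := Multiset.le_iff_count.mp hsum e
      rw [Multiset.count_sum'] at h2
      calc Multiset.count e (f i) + Multiset.count e (f j)
          = ∑ k ∈ ({i, j} : Finset _), Multiset.count e (f k) := by
            rw [Finset.sum_pair (Ne.symm hj)]
        _ ≤ ∑ k, Multiset.count e (f k) :=
            Finset.sum_le_sum_of_subset (Finset.subset_univ _)
        _ ≤ _ := h2
    rw [Multiset.count_cons_self] at h1
    have hz : Multiset.count e (f j) = 0 := by omega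
    rw [Multiset.le_iff_count]
    intro d
    by_cases hd : d = e
    · subst hd
      simp [hz]
    · have h2 := Multiset.le_iff_count.mp (hf.1 j).1 d
      rwa [Multiset.count_cons_of_ne hd] at h2

end MGAux

namespace MGAux

open MG

variable {V : Type*}

lemma sym2_eq_diag_iff {x y v : V} : s(x,y) = s(v,v) ↔ (v = x ∧ v = y) := by
  rw [Sym2.eq_iff]
  constructor
  · rintro (⟨h1, h2⟩ | ⟨h1, h2⟩) <;> exact ⟨h1.symm, h2.symm⟩
  · rintro ⟨rfl, rfl⟩
    exact Or.inl ⟨rfl, rfl⟩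

lemma deg_edge_split (x y v : V) :
    (if s(x,y) = s(v,v) then 2 else if v ∈ s(x,y) then 1 else 0)
      = (if v = x then 1 else 0) + (if v = y then 1 else 0) := by
  simp only [sym2_eq_diag_iff, Sym2.mem_iff]
  by_cases hvx : v = x <;> by_cases hvy : v = y
  · subst hvx
    simp [hvy]
  · subst hvx
    simp [hvy]
  · subst hvy
    simp [hvx]
  · simp [hvx, hvy]

lemma cycle_combine {C1 C2 : Multiset (Sym2 V)} {a1 b1 a2 b2 : V}
    (h1 : IsCycle C1) (h2 : IsCycle C2)
    (he1 : s(a1,b1) ∈ C1) (he2 : s(a2,b2) ∈ C2)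
    (hd : Disjoint (support C1) (support C2)) :
    IsCycle (s(a1,a2) ::ₘ s(b1,b2) ::ₘ (C1.erase s(a1,b1) + C2.erase s(a2,b2))) ∧
    support (s(a1,a2) ::ₘ s(b1,b2) ::ₘ (C1.erase s(a1,b1) + C2.erase s(a2,b2)))
      ⊆ support C1 ∪ support C2 := by
  classical
  set E1 := C1.erase s(a1,b1) with hE1
  set E2 := C2.erase s(a2,b2) with hE2
  set D := s(a1,a2) ::ₘ s(b1,b2) ::ₘ (E1 + E2) with hD
  have ha1C : a1 ∈ support C1 := ⟨s(a1,b1), he1, by simp⟩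
  have hb1C : b1 ∈ support C1 := ⟨s(a1,b1), he1, by simp⟩
  have ha2C : a2 ∈ support C2 := ⟨s(a2,b2), he2, by simp⟩
  have hb2C : b2 ∈ support C2 := ⟨s(a2,b2), he2, by simp⟩
  have hsE1 : support E1 ⊆ support C1 := support_mono (Multiset.erase_le _ _)
  have hsE2 : support E2 ⊆ support C2 := support_mono (Multiset.erase_le _ _)
  have hC1eq : C1 = s(a1,b1) ::ₘ E1 := (Multiset.cons_erase he1).symm
  have hC2eq : C2 = s(a2,b2) ::ₘ E2 := (Multiset.cons_erase he2).symm
  have hsupD : support D ⊆ support C1 ∪ support C2 := by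
    rintro v ⟨d, hdD, hv⟩
    rw [hD] at hdD
    rcases Multiset.mem_cons.mp hdD with rfl | hdD
    · rcases Sym2.mem_iff.mp hv with rfl | rfl
      · exact Or.inl ha1C
      · exact Or.inr ha2C
    rcases Multiset.mem_cons.mp hdD with rfl | hdD
    · rcases Sym2.mem_iff.mp hv with rfl | rfl
      · exact Or.inl hb1C
      · exact Or.inr hb2C
    rcases Multiset.mem_add.mp hdD with hdD | hdD
    · exact Or.inl (hsE1 ⟨d, hdD, hv⟩)
    · exact Or.inr (hsE2 ⟨d, hdD, hv⟩)
  have hcross : ∀ v ∈ support C1, v ∉ support C2 := fun v hv => Set.disjoint_left.mp hd hv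
  have hdeg1 : ∀ v ∈ support C1, deg D v = 2 := by
    intro v hv1
    have hv2 : v ∉ support C2 := hcross v hv1
    have hva2 : v ≠ a2 := fun h => hv2 (h ▸ ha2C)
    have hvb2 : v ≠ b2 := fun h => hv2 (h ▸ hb2C)
    have hE2z : deg E2 v = 0 := deg_eq_zero fun h => hv2 (hsE2 h)
    have h2 : deg C1 v = 2 := h1.2.2 v hv1
    rw [hC1eq, deg_cons, deg_edge_split] at h2
    rw [hD, deg_cons, deg_cons, deg_add, hE2z, deg_edge_split, deg_edge_split]
    rw [if_neg hva2, if_neg hvb2]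
    omega
  have hdeg2 : ∀ v ∈ support C2, deg D v = 2 := by
    intro v hv2'
    have hv1 : v ∉ support C1 := fun h => hcross v h hv2'
    have hva1 : v ≠ a1 := fun h => hv1 (h ▸ ha1C)
    have hvb1 : v ≠ b1 := fun h => hv1 (h ▸ hb1C)
    have hE1z : deg E1 v = 0 := deg_eq_zero fun h => hv1 (hsE1 h)
    have h2' : deg C2 v = 2 := h2.2.2 v hv2'
    rw [hC2eq, deg_cons, deg_edge_split] at h2'
    rw [hD, deg_cons, deg_cons, deg_add, hE1z, deg_edge_split, deg_edge_split]
    rw [if_neg hva1, if_neg hvb1]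
    omega
  have hE1D : E1 ≤ D := le_trans (Multiset.le_add_right _ _)
    (le_trans (Multiset.le_cons_self _ _) (Multiset.le_cons_self _ _))
  have hE2D : E2 ≤ D := le_trans (Multiset.le_add_left _ _)
    (le_trans (Multiset.le_cons_self _ _) (Multiset.le_cons_self _ _))
  have hr1 : ∀ v ∈ support C1, Reach D v a1 := by
    intro v hv
    have h3 : Reach C1 v a1 := h1.2.1.2 v hv a1 ha1C
    exact reach_mono hE1D (reach_erase h1 he1 h3)
  have hr2 : ∀ v ∈ support C2, Reach D v a1 := by
    intro v hv
    have h3 : Reach C2 v a2 := h2.2.1.2 v hv a2 ha2C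
    have h4 : Reach D v a2 := reach_mono hE2D (reach_erase h2 he2 h3)
    refine h4.tail ?_
    show s(a2,a1) ∈ D
    rw [Sym2.eq_swap]
    exact Multiset.mem_cons_self _ _
  have hrD : ∀ v ∈ support D, Reach D v a1 := by
    intro v hv
    rcases hsupD hv with h | h
    · exact hr1 v h
    · exact hr2 v h
  have ha1D : a1 ∈ support D := ⟨s(a1,a2), Multiset.mem_cons_self _ _, by simp⟩
  refine ⟨⟨by simp [hD], ⟨⟨a1, ha1D⟩, ?_⟩, ?_⟩, hsupD⟩
  · intro a ha b hb
    exact (hrD a ha).trans (reach_symm (hrD b hb))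
  · intro v hv
    rcases hsupD hv with h | h
    · exact hdeg1 v h
    · exact hdeg2 v h

end MGAux

/-- For a 3-edge-cut `{e_A, e_B, e_C}` separating `G` into `G1` and `G2`: if adding to
each side the edge joining its two attachments of `e_A` and `e_B` raises its `cp` by
one, then `cp G ≥ cp G1 + cp G2 + 1`. -/
theorem cp_three_edge_cut_combine {V : Type*} (G G1 G2 : Multiset (Sym2 V))
    (a1 a2 b1 b2 c1 c2 : V)
    (hG : G = s(a1, a2) ::ₘ s(b1, b2) ::ₘ s(c1, c2) ::ₘ (G1 + G2))
    (hdisj : Disjoint (MG.support G1) (MG.support G2))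
    (hc1 : MG.Conn G1) (hc2 : MG.Conn G2)
    (ha1 : a1 ∈ MG.support G1) (hb1 : b1 ∈ MG.support G1) (hc1' : c1 ∈ MG.support G1)
    (ha2 : a2 ∈ MG.support G2) (hb2 : b2 ∈ MG.support G2) (hc2' : c2 ∈ MG.support G2)
    (hcp1 : MG.cp (s(a1, b1) ::ₘ G1) = MG.cp G1 + 1)
    (hcp2 : MG.cp (s(a2, b2) ::ₘ G2) = MG.cp G2 + 1) :
    MG.cp G1 + MG.cp G2 + 1 ≤ MG.cp G := by
  classical
  obtain ⟨f, i1, hf, he1, hE1le, hfle⟩ := MGAux.extract hcp1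
  obtain ⟨g, i2, hg, he2, hE2le, hgle⟩ := MGAux.extract hcp2
  have hC1cyc : MG.IsCycle (f i1) := (hf.1 i1).2
  have hC2cyc : MG.IsCycle (g i2) := (hg.1 i2).2
  have hsupC1 : MG.support (f i1) ⊆ MG.support G1 := by
    rintro v ⟨d, hd, hv⟩
    rcases Multiset.mem_cons.mp (Multiset.mem_of_le (hf.1 i1).1 hd) with rfl | h
    · rcases Sym2.mem_iff.mp hv with rfl | rfl
      exacts [ha1, hb1]
    · exact ⟨d, h, hv⟩
  have hsupC2 : MG.support (g i2) ⊆ MG.support G2 := by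
    rintro v ⟨d, hd, hv⟩
    rcases Multiset.mem_cons.mp (Multiset.mem_of_le (hg.1 i2).1 hd) with rfl | h
    · rcases Sym2.mem_iff.mp hv with rfl | rfl
      exacts [ha2, hb2]
    · exact ⟨d, h, hv⟩
  have hdC : Disjoint (MG.support (f i1)) (MG.support (g i2)) :=
    Set.disjoint_of_subset hsupC1 hsupC2 hdisj
  obtain ⟨hDcyc, hDsup⟩ := MGAux.cycle_combine hC1cyc hC2cyc he1 he2 hdC
  have hDG : s(a1,a2) ::ₘ s(b1,b2) ::ₘ ((f i1).erase s(a1,b1) + (g i2).erase s(a2,b2)) ≤ G := by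
    rw [hG]
    refine Multiset.cons_le_cons _ (Multiset.cons_le_cons _ ?_)
    exact le_trans (add_le_add hE1le hE2le) (Multiset.le_cons_self _ _)
  have hG1G : G1 ≤ G := by
    rw [hG]
    exact le_trans (le_trans (Multiset.le_add_right _ _) (Multiset.le_cons_self _ _))
      (le_trans (Multiset.le_cons_self _ _) (Multiset.le_cons_self _ _))
  have hG2G : G2 ≤ G := by
    rw [hG]
    exact le_trans (le_trans (Multiset.le_add_left _ _) (Multiset.le_cons_self _ _))
      (le_trans (Multiset.le_cons_self _ _) (Multiset.le_cons_self _ _))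
  have hsupf : ∀ j, j ≠ i1 → MG.support (f j) ⊆ MG.support G1 :=
    fun j hj => MGAux.support_mono (hfle j hj)
  have hsupg : ∀ j, j ≠ i2 → MG.support (g j) ⊆ MG.support G2 :=
    fun j hj => MGAux.support_mono (hgle j hj)
  have hdfD : ∀ j, j ≠ i1 → Disjoint (MG.support (f j))
      (MG.support (s(a1,a2) ::ₘ s(b1,b2) ::ₘ ((f i1).erase s(a1,b1) + (g i2).erase s(a2,b2)))) := by
    intro j hj
    refine Set.disjoint_of_subset_right hDsup ?_
    rw [Set.disjoint_union_right]
    exact ⟨hf.2 j i1 hj, Set.disjoint_of_subset (hsupf j hj) hsupC2 hdisj⟩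
  have hdgD : ∀ j, j ≠ i2 → Disjoint (MG.support (g j))
      (MG.support (s(a1,a2) ::ₘ s(b1,b2) ::ₘ ((f i1).erase s(a1,b1) + (g i2).erase s(a2,b2)))) := by
    intro j hj
    refine Set.disjoint_of_subset_right hDsup ?_
    rw [Set.disjoint_union_right]
    exact ⟨Set.disjoint_of_subset (hsupg j hj) hsupC1 hdisj.symm, hg.2 j i2 hj⟩
  refine MGAux.le_cp ⟨fun k : Fin (MG.cp G1 + MG.cp G2 + 1) =>
    if hk : (k : ℕ) < MG.cp G1 then f (i1.succAbove ⟨(k : ℕ), hk⟩)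
    else if hk2 : (k : ℕ) < MG.cp G1 + MG.cp G2 then
      g (i2.succAbove ⟨(k : ℕ) - MG.cp G1, by omega⟩)
    else s(a1,a2) ::ₘ s(b1,b2) ::ₘ ((f i1).erase s(a1,b1) + (g i2).erase s(a2,b2)), ?_, ?_⟩
  · intro k
    dsimp only
    by_cases hk : (k : ℕ) < MG.cp G1
    · rw [dif_pos hk]
      have hne := Fin.succAbove_ne i1 ⟨(k : ℕ), hk⟩
      exact ⟨le_trans (hfle _ hne) hG1G, (hf.1 _).2⟩
    · by_cases hk2 : (k : ℕ) < MG.cp G1 + MG.cp G2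
      · rw [dif_neg hk, dif_pos hk2]
        have hne := Fin.succAbove_ne i2 ⟨(k : ℕ) - MG.cp G1, by omega⟩
        exact ⟨le_trans (hgle _ hne) hG2G, (hg.1 _).2⟩
      · rw [dif_neg hk, dif_neg hk2]
        exact ⟨hDG, hDcyc⟩
  · intro k k' hkk'
    dsimp only
    by_cases hk : (k : ℕ) < MG.cp G1 <;> by_cases hk' : (k' : ℕ) < MG.cp G1
    · rw [dif_pos hk, dif_pos hk']
      refine hf.2 _ _ fun h => hkk' ?_
      have h2 := Fin.succAbove_right_injective (p := i1) h
      have h3 : (k : ℕ) = (k' : ℕ) := by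
        have h4 := congrArg Fin.val h2
        simpa using h4
      exact Fin.ext h3
    · rw [dif_pos hk]
      by_cases hk2 : (k' : ℕ) < MG.cp G1 + MG.cp G2
      · rw [dif_neg hk', dif_pos hk2]
        exact Set.disjoint_of_subset (hsupf _ (Fin.succAbove_ne i1 _))
          (hsupg _ (Fin.succAbove_ne i2 _)) hdisj
      · rw [dif_neg hk', dif_neg hk2]
        exact hdfD _ (Fin.succAbove_ne i1 _)
    · rw [dif_pos hk']
      by_cases hk2 : (k : ℕ) < MG.cp G1 + MG.cp G2
      · rw [dif_neg hk, dif_pos hk2]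
        exact Set.disjoint_of_subset (hsupg _ (Fin.succAbove_ne i2 _))
          (hsupf _ (Fin.succAbove_ne i1 _)) hdisj.symm
      · rw [dif_neg hk, dif_neg hk2]
        exact (hdfD _ (Fin.succAbove_ne i1 _)).symm
    · by_cases hk2 : (k : ℕ) < MG.cp G1 + MG.cp G2 <;>
        by_cases hk2' : (k' : ℕ) < MG.cp G1 + MG.cp G2
      · rw [dif_neg hk, dif_pos hk2, dif_neg hk', dif_pos hk2']
        refine hg.2 _ _ fun h => hkk' ?_
        have h2 := Fin.succAbove_right_injective (p := i2) h
        have hv : (k : ℕ) - MG.cp G1 = (k' : ℕ) - MG.cp G1 := by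
          have h4 := congrArg Fin.val h2
          simpa using h4
        exact Fin.ext (by omega)
      · rw [dif_neg hk, dif_pos hk2, dif_neg hk', dif_neg hk2']
        exact hdgD _ (Fin.succAbove_ne i2 _)
      · rw [dif_neg hk, dif_neg hk2, dif_neg hk', dif_pos hk2']
        exact (hdgD _ (Fin.succAbove_ne i2 _)).symm
      · exfalso
        have h1 : (k : ℕ) < MG.cp G1 + MG.cp G2 + 1 := k.isLt
        have h2 : (k' : ℕ) < MG.cp G1 + MG.cp G2 + 1 := k'.isLt
        exact hkk' (Fin.ext (by omega))
end
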